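/- arXiv:0908.2603 — 6 statements merged into one kernel-verified Lean document; each statement's English description precedes it below -/
import Mathlib

section
/- Fix ξ ∈ G with Δ(ξ) > 1 and p ∈ [1,∞). Then for every u ∈ D^p(G) there exists u_∞ ∈ D^p(G) such that u − u_∞ ∈ L^p(G,μ) and ρ(ξ)u_∞ = u_∞ μ-almost everywhere. (In other words, the sequence (ρ(ξ^n)u − u)_{n≥0} converges in L^p(G,μ) to some v, and u_∞ = u + v has the stated properties.) -/
open MeasureTheory Filter
open scoped ENNReal Pointwise Topology

/-- `f` belongs to the `p`-Dirichlet space `D^p(G)`: `f` is measurable, and there is a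
continuous map `F : G → L^p(G,μ)` with `F g` a.e. equal to `f - ρ(g)f` for all `g`,
where `(ρ(g)f)(h) = f(hg)`. -/
def MemDirichlet {G : Type*} [Group G] [TopologicalSpace G] [MeasurableSpace G]
    (μ : Measure G) (p : ℝ≥0∞) [Fact (1 ≤ p)] (f : G → ℝ) : Prop :=
  AEStronglyMeasurable f μ ∧
    ∃ F : G → Lp ℝ p μ, Continuous F ∧
      ∀ g : G, ⇑(F g) =ᵐ[μ] fun h => f h - f (h * g)

set_option maxHeartbeats 1000000 in
set_option synthInstance.maxHeartbeats 400000 in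
/-- Fix `ξ ∈ G` with `Δ(ξ) > 1` and `p ∈ [1,∞)`. Then for every `u ∈ D^p(G)` there exists
`u_∞ ∈ D^p(G)` such that `u − u_∞ ∈ L^p(G,μ)` and `ρ(ξ)u_∞ = u_∞` μ-a.e. -/
theorem dirichlet_exists_xi_invariant
    {G : Type*} [Group G] [TopologicalSpace G] [IsTopologicalGroup G]
    [LocallyCompactSpace G] [MeasurableSpace G] [BorelSpace G]
    (μ : Measure G) [μ.IsHaarMeasure]
    (Δ : G → ℝ)
    (hΔ : ∀ (g : G) (E : Set G), MeasurableSet E →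
      μ ((fun x => x * g) '' E) = ENNReal.ofReal (Δ g) * μ E)
    (p : ℝ≥0∞) [Fact (1 ≤ p)] (hp2 : p ≠ ∞)
    (ξ : G) (hξ : 1 < Δ ξ)
    (u : G → ℝ) (hu : MemDirichlet μ p u) :
    ∃ v : G → ℝ, MemDirichlet μ p v ∧ MemLp (fun x => u x - v x) p μ ∧
      (fun h => v (h * ξ)) =ᵐ[μ] v := by
  classical
  obtain ⟨humeas, F, hFcont, hFspec⟩ := hu
  -- a compact set of positive finite measure
  obtain ⟨K, hKc, hKn⟩ := exists_compact_mem_nhds (1 : G)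
  set B : Set G := interior K with hBdef
  have hBm : MeasurableSet B := isOpen_interior.measurableSet
  have hB0 : μ B ≠ 0 := (μ.measure_pos_of_mem_nhds (interior_mem_nhds.mpr hKn)).ne'
  have hBtop : μ B ≠ ∞ := ((measure_mono interior_subset).trans_lt hKc.measure_lt_top).ne
  set c : G → ℝ≥0∞ := fun g => ENNReal.ofReal (Δ g⁻¹) with hcdef
  have hctop : ∀ g : G, c g ≠ ∞ := fun g => ENNReal.ofReal_ne_top
  have hmeasτ : ∀ g : G, Measurable fun x : G => x * g := fun g => measurable_mul_const g
  have hmap : ∀ g : G, μ.map (fun x => x * g) = c g • μ := by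
    intro g
    ext E hE
    rw [Measure.map_apply (hmeasτ g) hE, Measure.smul_apply, smul_eq_mul]
    have h1 : (fun x : G => x * g) ⁻¹' E = (fun x => x * g⁻¹) '' E := by
      rw [Set.image_mul_right, inv_inv]
    rw [h1, hΔ g⁻¹ E hE]
  have hmapK : ∀ g : G, μ ((fun x : G => x * g) ⁻¹' B) = c g * μ B := by
    intro g
    rw [← Measure.map_apply (hmeasτ g) hBm, hmap g, Measure.smul_apply,
      smul_eq_mul]
  have hcancel : ∀ {a b : ℝ≥0∞}, a * μ B = b * μ B → a = b := by
    intro a b h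
    exact (ENNReal.mul_left_inj hB0 hBtop).mp h
  have hmul : ∀ g h : G, c (g * h) = c g * c h := by
    intro g h
    have hKm := hBm
    apply hcancel
    have h1 : (fun x : G => x * (g * h)) ⁻¹' B
        = (fun x : G => x * g) ⁻¹' ((fun x : G => x * h) ⁻¹' B) := by
      ext x; simp [mul_assoc]
    rw [← hmapK (g * h), h1, ← Measure.map_apply (hmeasτ g) ((hmeasτ h) hKm), hmap g,
      Measure.smul_apply, smul_eq_mul, hmapK h, mul_assoc]
  have hone : c 1 = 1 := by
    apply hcancel
    rw [← hmapK 1, one_mul]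
    simp
  have hinv : ∀ g : G, c g * c g⁻¹ = 1 := by
    intro g
    rw [← hmul, mul_inv_cancel, hone]
  have hc0 : ∀ g : G, c g ≠ 0 := by
    intro g h0
    have := hinv g
    rw [h0, zero_mul] at this
    exact zero_ne_one this
  have hcξ : c ξ < 1 := by
    have h1 : (1 : ℝ≥0∞) < c ξ⁻¹ := by
      rw [hcdef]
      simp only [inv_inv]
      exact ENNReal.one_lt_ofReal.mpr hξ
    rw [ENNReal.eq_inv_of_mul_eq_one_left (hinv ξ)]
    exact ENNReal.inv_lt_one.mpr h1
  -- exponent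
  set q : ℝ := (1 / p).toReal with hqdef
  have hq0 : 0 ≤ q := ENNReal.toReal_nonneg
  have hp0 : p ≠ 0 := by
    have : (1 : ℝ≥0∞) ≤ p := Fact.out
    intro h; rw [h] at this; exact (not_le.mpr zero_lt_one) this
  have hqpos : 0 < q := by
    apply ENNReal.toReal_pos
    · simp [hp2]
    · simp [hp0]
  -- translated eLpNorm
  have hsn : ∀ (g : G) (f : G → ℝ), AEStronglyMeasurable f μ →
      eLpNorm (fun x => f (x * g)) p μ = c g ^ q * eLpNorm f p μ := by
    intro g f hf
    have hac : c g • μ ≪ μ :=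
      Measure.AbsolutelyContinuous.mk fun s _ hs => by simp [Measure.smul_apply, hs]
    have h1 : eLpNorm f p (μ.map fun x => x * g) = eLpNorm (f ∘ fun x => x * g) p μ :=
      eLpNorm_map_measure (by rw [hmap]; exact hf.mono_ac hac) (hmeasτ g).aemeasurable
    rw [hmap] at h1
    calc eLpNorm (fun x => f (x * g)) p μ = eLpNorm f p (c g • μ) := h1.symm
      _ = c g ^ q * eLpNorm f p μ := by
          rw [eLpNorm_smul_measure_of_ne_top hp2, smul_eq_mul, hqdef]
  have hqmp : ∀ g : G, Measure.QuasiMeasurePreserving (fun x : G => x * g) μ μ := by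
    intro g
    refine ⟨hmeasτ g, ?_⟩
    rw [hmap]
    exact Measure.AbsolutelyContinuous.mk fun s _ hs => by simp [Measure.smul_apply, hs]
  have hmem : ∀ (g : G) (f : Lp ℝ p μ), MemLp (fun x => (f : G → ℝ) (x * g)) p μ := by
    intro g f
    refine ⟨(Lp.aestronglyMeasurable f).comp_quasiMeasurePreserving (hqmp g), ?_⟩
    rw [hsn g _ (Lp.aestronglyMeasurable f)]
    exact ENNReal.mul_lt_top
      (ENNReal.rpow_lt_top_of_nonneg hq0 (hctop g)) (Lp.eLpNorm_lt_top f)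
  -- translation operator on Lp
  set T : G → Lp ℝ p μ → Lp ℝ p μ := fun g f => (hmem g f).toLp _ with hTdef
  have hTcoe : ∀ (g : G) (f : Lp ℝ p μ), ⇑(T g f) =ᵐ[μ] fun x => f (x * g) :=
    fun g f => (hmem g f).coeFn_toLp
  have hTlip : ∀ g : G, LipschitzWith (c g ^ q).toNNReal (T g) := by
    intro g
    apply LipschitzWith.of_dist_le_mul
    intro f₁ f₂
    rw [Lp.dist_def, Lp.dist_def]
    have he : ⇑(T g f₁) - ⇑(T g f₂) =ᵐ[μ] fun x => (⇑f₁ - ⇑f₂) (x * g) := by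
      filter_upwards [hTcoe g f₁, hTcoe g f₂] with x h1 h2
      simp [h1, h2]
    have h2 : eLpNorm (⇑(T g f₁) - ⇑(T g f₂)) p μ = c g ^ q * eLpNorm (⇑f₁ - ⇑f₂) p μ := by
      rw [eLpNorm_congr_ae he,
        hsn g _ ((Lp.aestronglyMeasurable f₁).sub (Lp.aestronglyMeasurable f₂))]
    rw [h2, ENNReal.toReal_mul]
    exact le_of_eq rfl
  -- identity T g (F (ξ^n)) = F (g ξ^n) - F g
  have hTF : ∀ (g : G) (n : ℕ), T g (F (ξ ^ n)) = F (g * ξ ^ n) - F g := by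
    intro g n
    apply Lp.ext
    have h2 := (hqmp g).ae_eq_comp (hFspec (ξ ^ n))
    filter_upwards [hTcoe g (F (ξ ^ n)), h2, Lp.coeFn_sub (F (g * ξ ^ n)) (F g),
      hFspec (g * ξ ^ n), hFspec g] with x hx1 hx2 hx3 hx4 hx5
    simp only [Function.comp_apply] at hx2
    rw [hx1, hx2, hx3, Pi.sub_apply, hx4, hx5, mul_assoc]
    ring
  -- the series of differences
  set Cξ : ℝ≥0∞ := eLpNorm (⇑(F ξ)) p μ with hCξdef
  have hCξtop : Cξ ≠ ∞ := (Lp.eLpNorm_lt_top _).ne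
  set rn : ℝ := (c ξ ^ q).toReal with hrndef
  have hrn0 : 0 ≤ rn := ENNReal.toReal_nonneg
  have hrn1 : rn < 1 := by
    have h1 : c ξ ^ q < 1 := ENNReal.rpow_lt_one hcξ hqpos
    have := ENNReal.toReal_strict_mono (by simp) h1
    simpa using this
  have hcpow : ∀ n : ℕ, c (ξ ^ n) = c ξ ^ n := by
    intro n
    induction n with
    | zero => simpa using hone
    | succ n ih => rw [pow_succ, hmul, ih, pow_succ]
  set D : ℕ → G → Lp ℝ p μ := fun n g => F (g * ξ ^ (n + 1)) - F (g * ξ ^ n) with hDdef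
  have hrpow : ∀ n : ℕ, ((c ξ) ^ n : ℝ≥0∞) ^ q = (c ξ ^ q) ^ n := by
    intro n
    rw [← ENNReal.rpow_natCast (c ξ) n, ← ENNReal.rpow_mul, mul_comm, ENNReal.rpow_mul,
      ENNReal.rpow_natCast]
  have hDnorm : ∀ (n : ℕ) (g : G),
      ‖D n g‖ = (c g ^ q).toReal * Cξ.toReal * rn ^ n := by
    intro n g
    have he : ⇑(F (g * ξ ^ (n + 1))) - ⇑(F (g * ξ ^ n))
        =ᵐ[μ] fun x => (F ξ) (x * (g * ξ ^ n)) := by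
      have h2 := (hqmp (g * ξ ^ n)).ae_eq_comp (hFspec ξ)
      filter_upwards [hFspec (g * ξ ^ (n + 1)), hFspec (g * ξ ^ n), h2] with x h4 h5 h6
      simp only [Function.comp_apply] at h6
      rw [Pi.sub_apply, h4, h5, h6]
      have hxx : x * (g * ξ ^ (n + 1)) = x * (g * ξ ^ n) * ξ := by
        rw [pow_succ]; group
      rw [hxx]
      ring
    have hcalc : eLpNorm (⇑(D n g)) p μ = c g ^ q * (c ξ ^ q) ^ n * Cξ := by
      calc eLpNorm (⇑(D n g)) p μ
          = eLpNorm (⇑(F (g * ξ ^ (n + 1))) - ⇑(F (g * ξ ^ n))) p μ :=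
            eLpNorm_congr_ae (Lp.coeFn_sub _ _)
        _ = eLpNorm (fun x => (F ξ) (x * (g * ξ ^ n))) p μ := eLpNorm_congr_ae he
        _ = c (g * ξ ^ n) ^ q * Cξ := hsn _ _ (Lp.aestronglyMeasurable _)
        _ = c g ^ q * (c ξ ^ q) ^ n * Cξ := by
            rw [hmul, hcpow, ENNReal.mul_rpow_of_nonneg _ _ hq0, hrpow]
    rw [Lp.norm_def, hcalc, ENNReal.toReal_mul, ENNReal.toReal_mul, ENNReal.toReal_pow]
    ring
  have hgeom : ∀ A : ℝ, Summable fun n : ℕ => A * rn ^ n :=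
    fun A => (summable_geometric_of_lt_one hrn0 hrn1).mul_left A
  have hDsum : ∀ g : G, Summable fun n => D n g := by
    intro g
    apply Summable.of_norm
    have : (fun n => ‖D n g‖) = fun n => ((c g ^ q).toReal * Cξ.toReal) * rn ^ n := by
      funext n; rw [hDnorm]
    rw [this]
    exact hgeom _
  set W : G → Lp ℝ p μ := fun g => F g + ∑' n, D n g with hWdef
  have hWlim : ∀ g : G, Tendsto (fun n => F (g * ξ ^ n)) atTop (𝓝 (W g)) := by
    intro g
    have h1 := (hDsum g).hasSum.tendsto_sum_nat
    have h2 : ∀ n : ℕ, ∑ k ∈ Finset.range n, D k g = F (g * ξ ^ n) - F g := by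
      intro n
      have := Finset.sum_range_sub (fun k => F (g * ξ ^ k)) n
      simpa [hDdef, Finset.sum_sub_distrib] using this
    have h3 : Tendsto (fun n => F (g * ξ ^ n) - F g) atTop (𝓝 (∑' n, D n g)) :=
      Tendsto.congr h2 h1
    have h4 := h3.add_const (F g)
    simp only [sub_add_cancel] at h4
    have h5 : W g = ∑' n, D n g + F g := by rw [hWdef]; exact add_comm _ _
    rw [h5]
    exact h4
  -- continuity of W
  have hWcont : Continuous W := by
    rw [continuous_iff_continuousAt]
    intro g₀
    obtain ⟨L, hLc, hLn⟩ := exists_compact_mem_nhds g₀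
    set M : ℝ≥0∞ := μ (K * L⁻¹) / μ B with hMdef
    have hMtop : M ≠ ∞ :=
      (ENNReal.div_lt_top (hKc.mul hLc.inv).measure_lt_top.ne hB0).ne
    have hcL : ∀ g ∈ L, c g ≤ M := by
      intro g hg
      rw [hMdef, ENNReal.le_div_iff_mul_le (Or.inl hB0) (Or.inl hBtop),
        ← hmapK g]
      apply measure_mono
      intro x hx
      have hxx : x = (x * g) * g⁻¹ := by group
      rw [hxx]
      exact Set.mul_mem_mul (interior_subset hx) (Set.inv_mem_inv.mpr hg)
    have hb : ∀ (n : ℕ) (g : G), g ∈ L →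
        ‖D n g‖ ≤ ((M ^ q).toReal * Cξ.toReal) * rn ^ n := by
      intro n g hg
      rw [hDnorm]
      have h1 : (c g ^ q).toReal ≤ (M ^ q).toReal :=
        ENNReal.toReal_mono (ENNReal.rpow_ne_top_of_nonneg hq0 hMtop)
          (ENNReal.rpow_le_rpow (hcL g hg) hq0)
      have h2 : (c g ^ q).toReal * Cξ.toReal ≤ (M ^ q).toReal * Cξ.toReal :=
        mul_le_mul_of_nonneg_right h1 ENNReal.toReal_nonneg
      exact mul_le_mul_of_nonneg_right h2 (pow_nonneg hrn0 n)
    have hUC := tendstoUniformlyOn_tsum_nat (hgeom ((M ^ q).toReal * Cξ.toReal)) hb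
    have hcont : ContinuousOn (fun g => ∑' n, D n g) L := by
      apply hUC.continuousOn
      apply Filter.Frequently.of_forall
      intro N
      apply Continuous.continuousOn
      apply continuous_finset_sum
      intro i _
      exact (hFcont.comp (continuous_mul_right (ξ ^ (i + 1)))).sub
        (hFcont.comp (continuous_mul_right (ξ ^ i)))
    exact hFcont.continuousAt.add (hcont.continuousAt hLn)
  -- the limit w and its properties
  set w : Lp ℝ p μ := W 1 with hwdef
  have hw : Tendsto (fun n => F (ξ ^ n)) atTop (𝓝 w) := by
    have := hWlim 1
    simpa using this
  have hWξ : W ξ = w := by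
    have hpow : ∀ n : ℕ, ξ * ξ ^ n = ξ ^ (n + 1) := fun n => by
      rw [add_comm, pow_add, pow_one]
    have h1 : Tendsto (fun n => F (ξ ^ (n + 1))) atTop (𝓝 (W ξ)) := by
      have := hWlim ξ
      refine Tendsto.congr (fun n => ?_) this
      rw [hpow n]
    have h2 : Tendsto (fun n => F (ξ ^ (n + 1))) atTop (𝓝 w) :=
      hw.comp (tendsto_add_atTop_nat 1)
    exact tendsto_nhds_unique h1 h2
  have hWT : ∀ g : G, W g = F g + T g w := by
    intro g
    have h1 : Tendsto (fun n => T g (F (ξ ^ n))) atTop (𝓝 (T g w)) :=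
      ((hTlip g).continuous.tendsto w).comp hw
    have h2 : Tendsto (fun n => F (g * ξ ^ n) - F g) atTop (𝓝 (T g w)) :=
      Tendsto.congr (fun n => hTF g n) h1
    have h3 : Tendsto (fun n => F (g * ξ ^ n) - F g) atTop (𝓝 (W g - F g)) :=
      (hWlim g).sub_const (F g)
    have h4 : T g w = W g - F g := tendsto_nhds_unique h2 h3
    rw [h4]
    abel
  -- the candidate function
  set v : G → ℝ := fun x => u x - (w : G → ℝ) x with hvdef
  have hae : ∀ g : G, ⇑(W g - w) =ᵐ[μ] fun h => v h - v (h * g) := by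
    intro g
    have h1 : ⇑(W g) =ᵐ[μ] ⇑(F g) + ⇑(T g w) := by
      rw [hWT g]; exact Lp.coeFn_add _ _
    filter_upwards [Lp.coeFn_sub (W g) w, h1, hTcoe g w, hFspec g] with x h2 h3 h4 h5
    rw [Pi.sub_apply] at h2
    rw [h2, h3, Pi.add_apply, h4, h5, hvdef]
    ring
  refine ⟨v, ⟨humeas.sub (Lp.aestronglyMeasurable w), fun g => W g - w,
    hWcont.sub continuous_const, hae⟩, ?_, ?_⟩
  · have hvv : (fun x => u x - v x) = fun x => (w : G → ℝ) x := by
      funext x; rw [hvdef]; ring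
    rw [hvv]
    exact Lp.memLp w
  · have h0 : ⇑(W ξ - w) =ᵐ[μ] (0 : G → ℝ) := by
      rw [hWξ, sub_self]
      exact Lp.coeFn_zero ℝ p μ
    filter_upwards [hae ξ, h0] with x h1 h2
    have h3 : v x - v (x * ξ) = 0 := by rw [← h1, h2]; rfl
    have : v (x * ξ) = v x := by linarith
    exact this
end

section
/- Let G be a locally compact group admitting a contraction, i.e. a topological group automorphism α of G admitting a compact vacuum subset. Then the quotient topological group G/G₀ of G by its identity component is elliptic. -/
open Set Pointwise Topology Function

set_option linter.unusedSectionVars false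
set_option maxHeartbeats 1000000

section Core
variable {Q : Type*} [Group Q] [TopologicalSpace Q] [IsTopologicalGroup Q]

lemma my_coe_pow (a : MulAut Q) : ∀ k : ℕ, ⇑(a ^ k) = (⇑a)^[k] := by
  intro k
  induction k with
  | zero => simp [pow_zero]
  | succ k ih => rw [pow_succ, Function.iterate_succ, MulAut.coe_mul, ih]


lemma my_exist_mul_closure_nhd {W : Set Q} (hWc : IsCompact W) (hWo : IsOpen W) :
    ∃ T ∈ 𝓝 (1 : Q), W * T ⊆ W := by
  apply hWc.induction_on (p := fun S ↦ ∃ T ∈ 𝓝 (1 : Q), S * T ⊆ W)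
    ⟨Set.univ, by simp only [Filter.univ_mem, Set.empty_mul, Set.empty_subset, and_self]⟩
    (fun _ _ huv ⟨T, hT, mem⟩ ↦ ⟨T, hT, (Set.mul_subset_mul_right huv).trans mem⟩)
    (fun U V ⟨T₁, hT₁, mem1⟩ ⟨T₂, hT₂, mem2⟩ ↦ ⟨T₁ ∩ T₂, Filter.inter_mem hT₁ hT₂, by
      rw [Set.union_mul]
      exact Set.union_subset (Set.mul_subset_mul_left inter_subset_left |>.trans mem1)
        (Set.mul_subset_mul_left inter_subset_right |>.trans mem2)⟩)
  intro x memW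
  have : (x, 1) ∈ (fun p : Q × Q ↦ p.1 * p.2) ⁻¹' W := by simp [memW]
  rcases isOpen_prod_iff.mp (continuous_mul.isOpen_preimage W hWo) x 1 this with
    ⟨U, V, Uopen, Vopen, xmemU, onememV, prodsub⟩
  have h6 : U * V ⊆ W := Set.mul_subset_iff.mpr (fun _ hx _ hy ↦ prodsub (Set.mk_mem_prod hx hy))
  exact ⟨U ∩ W, ⟨U, Uopen.mem_nhds xmemU, W, fun _ a ↦ a, rfl⟩,
    V, Vopen.mem_nhds onememV, fun _ a ↦ h6 ((Set.mul_subset_mul_right inter_subset_left) a)⟩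

lemma my_vanDantzig {W : Set Q} (hWc : IsCompact W) (hWo : IsOpen W) (einW : 1 ∈ W) :
    ∃ H : Subgroup Q, IsOpen (H : Set Q) ∧ (H : Set Q) ⊆ W := by
  obtain ⟨T, hTnhd, hTmul⟩ := my_exist_mul_closure_nhd hWc hWo
  rcases mem_nhds_iff.mp hTnhd with ⟨U, UsubT, Uopen, onememU⟩
  set V : Set Q := U ∩ U⁻¹ with hVdef
  have hVnhd : V ∈ 𝓝 (1 : Q) := by
    simp [hVdef, Uopen.mem_nhds onememU, inv_mem_nhds_one]
  have hVinv : V⁻¹ = V := by simp [hVdef, Set.inter_comm]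
  have hVopen : IsOpen V := Uopen.inter Uopen.inv
  have hVmul : W * V ⊆ W :=
    fun a ha ↦ hTmul (Set.mul_subset_mul_left UsubT (Set.mul_subset_mul_left inter_subset_left ha))
  let S : Subgroup Q := {
    carrier := ⋃ n, V ^ (n + 1)
    mul_mem' := fun ha hb ↦ by
      rcases mem_iUnion.mp ha with ⟨k, hk⟩
      rcases mem_iUnion.mp hb with ⟨l, hl⟩
      apply mem_iUnion.mpr
      use k + 1 + l
      rw [add_assoc, pow_add]
      exact Set.mul_mem_mul hk hl
    one_mem' := by
      apply mem_iUnion.mpr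
      use 0
      simp [mem_of_mem_nhds hVnhd]
    inv_mem' := fun ha ↦ by
      rcases mem_iUnion.mp ha with ⟨k, hk⟩
      apply mem_iUnion.mpr
      use k
      rw [← hVinv]
      simpa only [inv_pow, Set.mem_inv, inv_inv] using hk }
  have hSo : IsOpen (⋃ n, V ^ (n + 1)) := by
    refine isOpen_iUnion (fun n ↦ ?_)
    rw [pow_succ]
    exact hVopen.mul_left
  refine ⟨S, hSo, ?_⟩
  have mulVpow (n : ℕ) : W * V ^ (n + 1) ⊆ W := by
    induction' n with n ih
    · simpa using hVmul
    · rw [pow_succ, ← mul_assoc]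
      exact (Set.mul_subset_mul_right ih).trans hVmul
  have hsub (n : ℕ) : V ^ (n + 1) ⊆ W * V ^ (n + 1) := by
    intro x xin
    rw [Set.mem_mul]
    exact ⟨1, einW, x, xin, one_mul x⟩
  exact iUnion_subset fun i a ha ↦ mulVpow i (hsub i ha)


lemma my_symm_pow (a : MulAut Q) (k : ℕ) :
    ⇑((a ^ (k+1)).symm) = ⇑a.symm ∘ ⇑((a ^ k).symm) := by
  funext x
  show (a ^ (k+1)).symm x = a.symm ((a ^ k).symm x)
  rw [MulEquiv.symm_apply_eq]
  show x = (a ^ k * a) _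
  rw [MulAut.mul_apply, MulEquiv.apply_symm_apply, MulEquiv.apply_symm_apply]

lemma my_symm_pow_continuous (a : MulAut Q) (ha' : Continuous ⇑a.symm) (k : ℕ) :
    Continuous ⇑((a ^ k).symm) := by
  induction k with
  | zero => rw [pow_zero]; exact continuous_id
  | succ k ih => rw [my_symm_pow]; exact ha'.comp ih

theorem my_elliptic [LocallyCompactSpace Q] [T2Space Q] [TotallyDisconnectedSpace Q]
    (e : Q ≃* Q) (he : Continuous ⇑e) (he' : Continuous ⇑e.symm)
    (Ub : Set Q) (hUb : IsCompact Ub)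
    (hvac : ∀ S : Set Q, IsCompact S → ∃ N : ℕ, ∀ k ≥ N, (⇑e)^[k] '' S ⊆ Ub)
    (K : Set Q) (hK : IsCompact K) :
    ∃ L : Subgroup Q, IsCompact (L : Set Q) ∧ K ⊆ (L : Set Q) := by
  classical
  set a : MulAut Q := e with ha
  set f : Q → Q := ⇑e with hf
  have hf1 : f 1 = 1 := map_one e
  have hfk1 : ∀ k : ℕ, f^[k] 1 = 1 := fun k => Function.iterate_fixed hf1 k
  have hfi : ∀ (k : ℕ) (x : Q), f^[k] x⁻¹ = (f^[k] x)⁻¹ := by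
    intro k x
    rw [← my_coe_pow a k]
    exact map_inv (a ^ k) x
  let bh : Homeomorph Q Q := ⟨e.toEquiv, he, he'⟩
  have hbh : ⇑bh = f := funext fun _ => rfl
  -- the symmetric compact seed set
  set S₀ : Set Q := (Ub ∪ K) ∪ {1} with hS₀
  set M : Set Q := S₀ ∪ S₀⁻¹ with hM
  have hS₀c : IsCompact S₀ := (hUb.union hK).union isCompact_singleton
  have hMc : IsCompact M := hS₀c.union hS₀c.inv
  have hMsymm : M⁻¹ = M := by
    rw [hM, Set.union_inv, inv_inv, Set.union_comm]
  have h1M : (1 : Q) ∈ M := Or.inl (Or.inr rfl)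
  have hKM : K ⊆ M := fun x hx => Or.inl (Or.inl (Or.inr hx))
  obtain ⟨N₁, hN₁⟩ := hvac M hMc
  -- the tail sets
  set E : ℕ → Set Q := fun N => ⋃ (k : ℕ) (_ : N ≤ k), f^[k] '' M with hE
  set D : ℕ → Set Q := fun N => closure (E N) with hD
  have hEmem : ∀ {N k : ℕ}, N ≤ k → f^[k] '' M ⊆ E N := by
    intro N k hk
    simp only [hE]
    exact subset_iUnion₂ (s := fun k (_ : N ≤ k) => f^[k] '' M) k hk
  have hEsub : ∀ {N : ℕ} {t : Set Q}, (∀ k, N ≤ k → f^[k] '' M ⊆ t) → E N ⊆ t := by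
    intro N t h
    simp only [hE]
    exact iUnion₂_subset h
  have hDanti : ∀ {N N' : ℕ}, N ≤ N' → D N' ⊆ D N :=
    fun h => closure_mono (hEsub fun k hk => hEmem (le_trans h hk))
  have hDsub : ∀ N, N₁ ≤ N → D N ⊆ Ub := fun N h =>
    closure_minimal (hEsub fun k hk => hN₁ k (le_trans h hk)) hUb.isClosed
  have hDcpt : ∀ N, N₁ ≤ N → IsCompact (D N) := fun N h =>
    hUb.of_isClosed_subset isClosed_closure (hDsub N h)
  have h1D : ∀ N, (1 : Q) ∈ D N := fun N =>
    subset_closure (hEmem le_rfl ⟨1, h1M, hfk1 N⟩)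
  have hEim : ∀ N, f '' E N = E (N + 1) := by
    intro N
    apply Subset.antisymm
    · simp only [hE, image_iUnion]
      refine iUnion_subset fun k => iUnion_subset fun hk => ?_
      rw [← Set.image_comp, ← Function.iterate_succ']
      exact hEmem (by omega)
    · refine hEsub fun k hk => ?_
      match k, hk with
      | k+1, hk =>
        rw [Function.iterate_succ', Set.image_comp]
        exact Set.image_mono (hEmem (by omega))
  have hDim : ∀ N, f '' D N = D (N + 1) := by
    intro N
    have h1 : f '' D N = closure (f '' E N) := by
      rw [← hbh]
      exact bh.image_closure (E N)
    rw [h1, hEim N]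
  -- the omega-limit set
  set Ω : Set Q := ⋂ n : ℕ, D (N₁ + n) with hΩ
  have hΩD : ∀ n, Ω ⊆ D (N₁ + n) := fun n => iInter_subset _ n
  have hΩUb : Ω ⊆ Ub := (hΩD 0).trans (hDsub _ (by omega))
  have hΩclosed : IsClosed Ω := isClosed_iInter fun n => isClosed_closure
  have hΩcpt : IsCompact Ω := hUb.of_isClosed_subset hΩclosed hΩUb
  have h1Ω : (1 : Q) ∈ Ω := mem_iInter.mpr fun n => h1D _
  have hΩim : f '' Ω = Ω := by
    rw [hΩ, ← hbh, Set.image_iInter bh.bijective, hbh]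
    apply Subset.antisymm
    · refine subset_iInter fun n => ?_
      refine (iInter_subset _ n).trans ?_
      rw [hDim (N₁ + n)]
      exact hDanti (by omega)
    · refine subset_iInter fun n => ?_
      refine (iInter_subset _ (n + 1)).trans ?_
      rw [hDim (N₁ + n)]
      exact subset_rfl
  have hΩfk : ∀ k : ℕ, f^[k] '' Ω = Ω := by
    intro k
    induction k with
    | zero => simp
    | succ k ih => rw [Function.iterate_succ', Set.image_comp, ih, hΩim]
  -- symmetry of Ω
  have hfkinv : ∀ (k : ℕ) (s : Set Q), (f^[k] '' s)⁻¹ = f^[k] '' s⁻¹ := by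
    intro k s
    ext x
    simp only [Set.mem_inv, Set.mem_image]
    constructor
    · rintro ⟨y, hy, hxy⟩
      exact ⟨y⁻¹, by simpa using hy, by rw [hfi]; rw [hxy]; simp⟩
    · rintro ⟨y, hy, rfl⟩
      exact ⟨y⁻¹, by simpa using hy, by rw [hfi]⟩
  have hDsymm : ∀ N, (D N)⁻¹ = D N := by
    intro N
    simp only [hD, inv_closure]
    congr 1
    simp only [hE, Set.iUnion_inv, hfkinv, hMsymm]
  have hΩsymm : Ω⁻¹ = Ω := by
    ext x
    rw [Set.mem_inv]
    simp only [hΩ, mem_iInter]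
    constructor
    · intro h n
      rw [← hDsymm (N₁ + n)]
      exact Set.mem_inv.mpr (h n)
    · intro h n
      have := h n
      rw [← hDsymm (N₁ + n)] at this
      exact Set.mem_inv.mp this
  -- powers of Ω
  have hfa : ∀ k : ℕ, ⇑(a ^ k) = f^[k] := by
    intro k
    rw [my_coe_pow]
  have himpow : ∀ (k t : ℕ), f^[k] '' (Ω ^ (t + 1)) = Ω ^ (t + 1) := by
    intro k t
    induction t with
    | zero => simpa [pow_one] using hΩfk k
    | succ t ih =>
      rw [pow_succ, ← hfa k, Set.image_mul, hfa k, ih, hΩfk k]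
  have hΩpowcpt : ∀ t : ℕ, IsCompact (Ω ^ (t + 1)) := by
    intro t
    induction t with
    | zero => simpa [pow_one] using hΩcpt
    | succ t ih => rw [pow_succ]; exact ih.mul hΩcpt
  have hΩpowUb : ∀ t : ℕ, Ω ^ (t + 1) ⊆ Ub := by
    intro t
    obtain ⟨N, hN⟩ := hvac _ (hΩpowcpt t)
    have h := hN N le_rfl
    rwa [himpow N t] at h
  -- the compact subgroup P₀
  have hsg : ∀ x ∈ Subgroup.closure Ω, x ∈ ⋃ t : ℕ, Ω ^ (t + 1) := by
    intro x hx
    refine Subgroup.closure_induction ?_ ?_ ?_ ?_ hx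
    · intro y hy
      exact mem_iUnion.mpr ⟨0, by simpa [pow_one] using hy⟩
    · exact mem_iUnion.mpr ⟨0, by simpa [pow_one] using h1Ω⟩
    · intro y z _ _ hy' hz'
      rcases mem_iUnion.mp hy' with ⟨s, hs⟩
      rcases mem_iUnion.mp hz' with ⟨u, hu⟩
      refine mem_iUnion.mpr ⟨s + u + 1, ?_⟩
      have hadd : Ω ^ (s + 1) * Ω ^ (u + 1) = Ω ^ (s + u + 1 + 1) := by
        rw [← pow_add]
        congr 1
        omega
      rw [← hadd]
      exact Set.mul_mem_mul hs hu
    · intro y _ hy'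
      rcases mem_iUnion.mp hy' with ⟨u, hu⟩
      refine mem_iUnion.mpr ⟨u, ?_⟩
      have hps : (Ω ^ (u + 1))⁻¹ = Ω ^ (u + 1) := by
        rw [← inv_pow, hΩsymm]
      rw [← hps]
      exact Set.inv_mem_inv.mpr hu
  set P₀ : Subgroup Q := (Subgroup.closure Ω).topologicalClosure with hP₀
  have hP₀coe : (P₀ : Set Q) = closure ((Subgroup.closure Ω : Subgroup Q) : Set Q) :=
    Subgroup.topologicalClosure_coe
  have hP₀sub : (P₀ : Set Q) ⊆ Ub := by
    rw [hP₀coe]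
    refine closure_minimal (fun x hx => ?_) hUb.isClosed
    rcases mem_iUnion.mp (hsg x hx) with ⟨u, hu⟩
    exact hΩpowUb u hu
  have hP₀cpt : IsCompact (P₀ : Set Q) :=
    hUb.of_isClosed_subset (by rw [hP₀coe]; exact isClosed_closure) hP₀sub
  have hΩP₀ : Ω ⊆ (P₀ : Set Q) := by
    rw [hP₀coe]
    exact fun x hx => subset_closure (Subgroup.subset_closure hx)
  -- a compact open subgroup from van Dantzig
  obtain ⟨Cnh, hCc, hCnh⟩ := exists_compact_mem_nhds (1 : Q)
  obtain ⟨V, hVbasis, h1V, hVsub⟩ :=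
    (loc_compact_Haus_tot_disc_of_zero_dim (H := Q)).exists_subset_of_mem_open
      (mem_interior_iff_mem_nhds.mpr hCnh) isOpen_interior
  have hVclopen : IsClopen V := hVbasis
  have hVcpt : IsCompact V := hCc.of_isClosed_subset hVclopen.1 (hVsub.trans interior_subset)
  obtain ⟨Wsub, hWopen, hWsubV⟩ := my_vanDantzig hVcpt hVclopen.2 h1V
  have hWcpt : IsCompact (Wsub : Set Q) :=
    hVcpt.of_isClosed_subset (Wsub.isClosed_of_isOpen hWopen) hWsubV
  -- the conjugation-stable open subgroup
  let W' : Subgroup Q := {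
    carrier := {g : Q | ∀ x ∈ (P₀ : Set Q), x * g * x⁻¹ ∈ Wsub}
    one_mem' := by
      intro x hx
      have h : x * 1 * x⁻¹ = 1 := by group
      rw [h]
      exact Wsub.one_mem
    mul_mem' := by
      intro g h hg hh x hx
      have heq : x * (g * h) * x⁻¹ = (x * g * x⁻¹) * (x * h * x⁻¹) := by group
      rw [heq]
      exact Wsub.mul_mem (hg x hx) (hh x hx)
    inv_mem' := by
      intro g hg x hx
      have heq : x * g⁻¹ * x⁻¹ = (x * g * x⁻¹)⁻¹ := by group
      rw [heq]
      exact Wsub.inv_mem (hg x hx) }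
  have hW'mem : ∀ {g : Q}, g ∈ W' ↔ ∀ x ∈ (P₀ : Set Q), x * g * x⁻¹ ∈ Wsub := Iff.rfl
  have hconjcont : Continuous (fun p : Q × Q => p.1 * p.2 * p.1⁻¹) := by continuity
  have hWopen' : IsOpen (W' : Set Q) := by
    have hincl : (P₀ : Set Q) ×ˢ ({1} : Set Q) ⊆
        (fun p : Q × Q => p.1 * p.2 * p.1⁻¹) ⁻¹' (Wsub : Set Q) := by
      rintro ⟨x, y⟩ ⟨-, hy⟩
      have hy1 : y = 1 := hy
      simp only [Set.mem_preimage, hy1]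
      have h : x * 1 * x⁻¹ = 1 := by group
      rw [h]
      exact Wsub.one_mem
    obtain ⟨u, v, huo, hvo, hsu, htv, huv⟩ :=
      generalized_tube_lemma hP₀cpt isCompact_singleton (hWopen.preimage hconjcont) hincl
    refine Subgroup.isOpen_of_mem_nhds W' (Filter.mem_of_superset (hvo.mem_nhds (htv rfl)) ?_)
    intro g hg
    exact fun x hx => huv (Set.mk_mem_prod (hsu hx) hg)
  have hW'W : (W' : Set Q) ⊆ (Wsub : Set Q) := by
    intro g hg
    have h := hW'mem.mp hg 1 P₀.one_mem
    simpa using h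
  have hW'cpt : IsCompact (W' : Set Q) :=
    hWcpt.of_isClosed_subset (W'.isClosed_of_isOpen hWopen') hW'W
  -- the compact open subgroup P ⊇ Ω
  let P : Subgroup Q := {
    carrier := (P₀ : Set Q) * (W' : Set Q)
    one_mem' := ⟨1, P₀.one_mem, 1, W'.one_mem, by simp⟩
    mul_mem' := by
      rintro p q ⟨b, hb, w, hw, rfl⟩ ⟨c, hc, w', hw', rfl⟩
      refine ⟨b * c, P₀.mul_mem hb hc, (c⁻¹ * w * c) * w',
        W'.mul_mem (hW'mem.mpr fun x hx => ?_) hw', by group⟩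
      have hxc : x * c⁻¹ ∈ (P₀ : Set Q) := P₀.mul_mem hx (P₀.inv_mem hc)
      have h := hW'mem.mp hw (x * c⁻¹) hxc
      have heq : (x * c⁻¹) * w * (x * c⁻¹)⁻¹ = x * (c⁻¹ * w * c) * x⁻¹ := by group
      rwa [heq] at h
    inv_mem' := by
      rintro p ⟨b, hb, w, hw, rfl⟩
      refine ⟨b⁻¹, P₀.inv_mem hb, b * w⁻¹ * b⁻¹, hW'mem.mpr fun x hx => ?_, by group⟩
      have hxb : x * b ∈ (P₀ : Set Q) := P₀.mul_mem hx hb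
      have h := hW'mem.mp (W'.inv_mem hw) (x * b) hxb
      have heq : (x * b) * w⁻¹ * (x * b)⁻¹ = x * (b * w⁻¹ * b⁻¹) * x⁻¹ := by group
      rwa [heq] at h }
  have hPcoe : (P : Set Q) = (P₀ : Set Q) * (W' : Set Q) := rfl
  have hPcpt : IsCompact (P : Set Q) := by
    rw [hPcoe]
    exact hP₀cpt.mul hW'cpt
  have hW'P : (W' : Set Q) ⊆ (P : Set Q) := fun g hg => ⟨1, P₀.one_mem, g, hg, one_mul g⟩
  have hPopen : IsOpen (P : Set Q) :=
    Subgroup.isOpen_of_mem_nhds P (Filter.mem_of_superset (hWopen'.mem_nhds W'.one_mem) hW'P)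
  have hΩP : Ω ⊆ (P : Set Q) := fun x hx => ⟨x, hΩP₀ hx, 1, W'.one_mem, mul_one x⟩
  -- absorption of a tail set into P
  have hinter : D N₁ ∩ ⋂ n : ℕ, (D (N₁ + n) ∩ (P : Set Q)ᶜ) = ∅ := by
    apply eq_empty_iff_forall_notMem.mpr
    rintro x ⟨hx0, hx⟩
    rw [mem_iInter] at hx
    have hxΩ : x ∈ Ω := mem_iInter.mpr fun n => (hx n).1
    exact (hx 0).2 (hΩP hxΩ)
  obtain ⟨tfin, ht⟩ := (hDcpt N₁ le_rfl).elim_finite_subfamily_closed _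
    (fun n => IsClosed.inter (by simp only [hD]; exact isClosed_closure)
      hPopen.isClosed_compl) hinter
  have habs : D (N₁ + tfin.sup id) ⊆ (P : Set Q) := by
    intro x hx
    by_contra hxP
    have hmem : x ∈ D N₁ ∩ ⋂ i ∈ tfin, (D (N₁ + i) ∩ (P : Set Q)ᶜ) := by
      refine ⟨hDanti (by omega) hx, mem_iInter₂.mpr fun i hi => ⟨hDanti ?_ hx, hxP⟩⟩
      have hle : i ≤ tfin.sup id := Finset.le_sup (f := id) hi
      omega
    rw [ht] at hmem
    exact hmem
  have hKP : ∀ x ∈ K, f^[N₁ + tfin.sup id] x ∈ (P : Set Q) := fun x hx =>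
    habs (subset_closure (hEmem le_rfl ⟨x, hKM hx, rfl⟩))
  -- pull back by the automorphism
  refine ⟨P.comap ((a ^ (N₁ + tfin.sup id) : MulAut Q) : Q →* Q), ?_, ?_⟩
  · have himg : (((a ^ (N₁ + tfin.sup id) : MulAut Q) : Q →* Q)) ⁻¹' (P : Set Q)
        = ⇑((a ^ (N₁ + tfin.sup id)).symm) '' (P : Set Q) := by
      ext x
      constructor
      · intro hx
        exact ⟨(a ^ (N₁ + tfin.sup id)) x, hx, by simp⟩
      · rintro ⟨y, hy, rfl⟩
        simpa using hy
    rw [Subgroup.coe_comap, himg]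
    exact hPcpt.image (my_symm_pow_continuous a he' _)
  · intro x hx
    rw [SetLike.mem_coe, Subgroup.mem_comap]
    have h := hKP x hx
    rw [← hfa (N₁ + tfin.sup id)] at h
    exact h

end Core
section Glue

/-- The identity component is a normal subgroup. -/
instance Subgroup.connectedComponentOfOne_normal (G : Type*) [Group G] [TopologicalSpace G]
    [IsTopologicalGroup G] : (Subgroup.connectedComponentOfOne G).Normal where
  conj_mem n hn g := by
    have hc : Continuous fun x : G => g * x * g⁻¹ := by continuity
    have h := hc.image_connectedComponent_subset (1 : G)
    have hmem : g * n * g⁻¹ ∈ (fun x : G => g * x * g⁻¹) '' connectedComponent (1 : G) :=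
      ⟨n, hn, rfl⟩
    exact (by simpa using h hmem : g * n * g⁻¹ ∈ connectedComponent (1 : G))

/-- If a locally compact group `G` admits a contraction (a topological group automorphism
with a compact vacuum subset), then the quotient `G/G₀` by the identity component is
elliptic: every compact subset of `G/G₀` is contained in a compact subgroup. -/
theorem quotient_by_identityComponent_elliptic
    {G : Type*} [Group G] [TopologicalSpace G] [IsTopologicalGroup G] [LocallyCompactSpace G]
    (α : G ≃* G) (hα : Continuous ⇑α) (hα' : Continuous ⇑α.symm)
    (hcontr : ∃ U : Set G, IsCompact U ∧ ∀ M : Set G, IsCompact M →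
      ∃ N : ℕ, ∀ k ≥ N, (⇑α)^[k] '' M ⊆ U) :
    ∀ K : Set (G ⧸ Subgroup.connectedComponentOfOne G), IsCompact K →
      ∃ L : Subgroup (G ⧸ Subgroup.connectedComponentOfOne G),
        IsCompact (L : Set (G ⧸ Subgroup.connectedComponentOfOne G)) ∧ K ⊆ (L : Set _) := by
  obtain ⟨U, hU, hvacG⟩ := hcontr
  set G₀ : Subgroup G := Subgroup.connectedComponentOfOne G with hG₀
  haveI hG₀closed : IsClosed (G₀ : Set G) := isClosed_connectedComponent
  have hπsurj : Function.Surjective (QuotientGroup.mk : G → G ⧸ G₀) :=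
    QuotientGroup.mk_surjective
  have hπcont : Continuous (QuotientGroup.mk : G → G ⧸ G₀) :=
    (QuotientGroup.isQuotientMap_mk G₀).continuous
  have hπopen : IsOpenMap (QuotientGroup.mk : G → G ⧸ G₀) := QuotientGroup.isOpenMap_coe
  -- connected fibers
  have hfib : ∀ y : G ⧸ G₀, IsConnected ((QuotientGroup.mk : G → G ⧸ G₀) ⁻¹' {y}) := by
    intro y
    obtain ⟨g, rfl⟩ := hπsurj y
    have heq : (QuotientGroup.mk : G → G ⧸ G₀) ⁻¹' {(g : G ⧸ G₀)}
        = (fun h => g * h) '' connectedComponent (1 : G) := by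
      ext z
      simp only [Set.mem_preimage, Set.mem_singleton_iff, Set.mem_image]
      constructor
      · intro hz
        refine ⟨g⁻¹ * z, QuotientGroup.eq.mp hz.symm, by group⟩
      · rintro ⟨h, hh, rfl⟩
        exact (QuotientGroup.eq.mpr (by rw [inv_mul_cancel_left]; exact hh)).symm
    rw [heq]
    exact isConnected_connectedComponent.image _ (continuous_mul_left g).continuousOn
  haveI : TotallyDisconnectedSpace (G ⧸ G₀) := by
    rw [totallyDisconnectedSpace_iff_connectedComponent_singleton]
    intro x
    obtain ⟨g, rfl⟩ := hπsurj x
    rw [← (QuotientGroup.isQuotientMap_mk G₀).image_connectedComponent hfib g]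
    apply Set.Subset.antisymm
    · rintro y ⟨z, hz, rfl⟩
      have h1 : g⁻¹ * z ∈ connectedComponent (1 : G) := by
        have h2 := (continuous_mul_left g⁻¹).image_connectedComponent_subset g ⟨z, hz, rfl⟩
        simpa using h2
      exact Set.mem_singleton_iff.mpr (QuotientGroup.eq.mpr h1).symm
    · intro y hy
      rw [Set.mem_singleton_iff] at hy
      exact hy ▸ ⟨g, mem_connectedComponent, rfl⟩
  -- the induced automorphism
  have hle : ∀ (β : G ≃* G), Continuous ⇑β → G₀ ≤ G₀.comap β.toMonoidHom := by
    intro β hβ g hg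
    have h := hβ.image_connectedComponent_subset (1 : G) ⟨g, hg, rfl⟩
    have h' : β g ∈ connectedComponent (1 : G) := by simpa [map_one] using h
    exact h'
  let φ : G ⧸ G₀ →* G ⧸ G₀ := QuotientGroup.map G₀ G₀ α.toMonoidHom (hle α hα)
  let ψ : G ⧸ G₀ →* G ⧸ G₀ := QuotientGroup.map G₀ G₀ α.symm.toMonoidHom (hle α.symm hα')
  have hφmk : ∀ g : G, φ ↑g = ↑(α g) := fun g => rfl
  have hψmk : ∀ g : G, ψ ↑g = ↑(α.symm g) := fun g => rfl
  let e : (G ⧸ G₀) ≃* (G ⧸ G₀) := {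
    toFun := φ
    invFun := ψ
    left_inv := by
      intro x
      refine QuotientGroup.induction_on x ?_
      intro g
      rw [hφmk, hψmk]
      simp
    right_inv := by
      intro x
      refine QuotientGroup.induction_on x ?_
      intro g
      rw [hψmk, hφmk]
      simp
    map_mul' := φ.map_mul }
  have hemk : ∀ g : G, e ↑g = ↑(α g) := hφmk
  have he : Continuous ⇑e := by
    rw [(QuotientGroup.isQuotientMap_mk G₀).continuous_iff]
    have h : ⇑e ∘ (QuotientGroup.mk : G → G ⧸ G₀) = QuotientGroup.mk ∘ ⇑α :=
      funext fun g => hemk g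
    rw [h]
    exact hπcont.comp hα
  have he' : Continuous ⇑e.symm := by
    rw [(QuotientGroup.isQuotientMap_mk G₀).continuous_iff]
    have h : ⇑e.symm ∘ (QuotientGroup.mk : G → G ⧸ G₀) = QuotientGroup.mk ∘ ⇑α.symm :=
      funext fun g => hψmk g
    rw [h]
    exact hπcont.comp hα'
  -- vacuum in the quotient
  have hcomm : ∀ (k : ℕ) (g : G), (⇑e)^[k] ↑g = ((((⇑α)^[k] g : G)) : G ⧸ G₀) := by
    intro k
    induction k with
    | zero => intro g; simp
    | succ k ih =>
      intro g
      rw [Function.iterate_succ', Function.iterate_succ']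
      simp only [Function.comp_apply]
      rw [ih, hemk]
  have hUbc : IsCompact ((QuotientGroup.mk : G → G ⧸ G₀) '' U) := hU.image hπcont
  have hvac : ∀ S : Set (G ⧸ G₀), IsCompact S →
      ∃ N : ℕ, ∀ k ≥ N, (⇑e)^[k] '' S ⊆ (QuotientGroup.mk : G → G ⧸ G₀) '' U := by
    intro S hS
    have hlift : ∃ Mg : Set G, IsCompact Mg ∧ S ⊆ (QuotientGroup.mk : G → G ⧸ G₀) '' Mg := by
      have h1 : ∀ q : G ⧸ G₀, ∃ C : Set G, IsCompact C ∧
          q ∈ (QuotientGroup.mk : G → G ⧸ G₀) '' interior C := by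
        intro q
        obtain ⟨g, rfl⟩ := hπsurj q
        obtain ⟨C, hCc, hCn⟩ := exists_compact_mem_nhds g
        exact ⟨C, hCc, ⟨g, mem_interior_iff_mem_nhds.mpr hCn, rfl⟩⟩
      choose C hCc hCm using h1
      obtain ⟨t, htcov⟩ := hS.elim_finite_subcover
        (fun q : S => (QuotientGroup.mk : G → G ⧸ G₀) '' interior (C q))
        (fun q => hπopen _ isOpen_interior)
        (fun x hx => Set.mem_iUnion.mpr ⟨⟨x, hx⟩, hCm x⟩)
      refine ⟨⋃ q ∈ t, C q, t.isCompact_biUnion (fun q _ => hCc q), ?_⟩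
      intro x hx
      have hx2 := htcov hx
      rw [Set.mem_iUnion] at hx2
      obtain ⟨q, hq⟩ := hx2
      rw [Set.mem_iUnion] at hq
      obtain ⟨hqt, hxq⟩ := hq
      obtain ⟨g, hg, rfl⟩ := hxq
      exact ⟨g, Set.mem_biUnion hqt (interior_subset hg), rfl⟩
    obtain ⟨Mg, hMgc, hSMg⟩ := hlift
    obtain ⟨N, hN⟩ := hvacG Mg hMgc
    refine ⟨N, fun k hk y hy => ?_⟩
    obtain ⟨x, hxS, rfl⟩ := hy
    obtain ⟨g, hgMg, rfl⟩ := hSMg hxS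
    rw [hcomm k g]
    exact ⟨(⇑α)^[k] g, hN k hk ⟨g, hgMg, rfl⟩, rfl⟩
  intro K hK
  exact my_elliptic e he he' _ hUbc hvac K hK

end Glue
end

section
/- Let H be a non-compact locally compact group whose identity component H₀ is compact, and let α be a topological group automorphism of H which contracts H (i.e. admits a compact vacuum subset). Then there exists a compact open subgroup V of H which is a vacuum subset for α. -/
open Set Function Filter Topology
open scoped Pointwise

/-- In a locally compact Hausdorff group with compact identity component, there is a
compact open neighborhood of the identity. -/
theorem exists_isCompact_isOpen_one_mem_aux {H : Type*} [Group H] [TopologicalSpace H]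
    [IsTopologicalGroup H] [LocallyCompactSpace H] [T2Space H]
    (hH0 : IsCompact (connectedComponent (1 : H))) :
    ∃ W : Set H, IsCompact W ∧ IsOpen W ∧ (1 : H) ∈ W := by
  obtain ⟨Q, hQc, hQint⟩ := exists_compact_superset hH0
  haveI : CompactSpace Q := isCompact_iff_compactSpace.mp hQc
  have h1Q : (1 : H) ∈ Q := interior_subset (hQint mem_connectedComponent)
  set x₀ : Q := ⟨1, h1Q⟩ with hx₀
  have key := connectedComponent_eq_iInter_isClopen x₀
  have hsub : (⋂ s : { s : Set Q // IsClopen s ∧ x₀ ∈ s }, (s : Set Q)) ⊆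
      (Subtype.val ⁻¹' interior Q : Set Q) := by
    rw [← key]
    intro z hz
    have : (z : H) ∈ connectedComponent (1 : H) := by
      have := continuous_subtype_val.image_connectedComponent_subset x₀
      exact this ⟨z, hz, rfl⟩
    exact hQint this
  -- finite subfamily
  have hclosed : ∀ s : { s : Set Q // IsClopen s ∧ x₀ ∈ s },
      IsClosed ((s : Set Q) \ (Subtype.val ⁻¹' interior Q)) := fun s =>
    s.2.1.isClosed.sdiff (isOpen_interior.preimage continuous_subtype_val)
  have hempty : ((univ : Set Q) ∩ ⋂ s : { s : Set Q // IsClopen s ∧ x₀ ∈ s },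
      ((s : Set Q) \ (Subtype.val ⁻¹' interior Q))) = ∅ := by
    rw [univ_inter, eq_empty_iff_forall_notMem]
    intro z hz
    rw [mem_iInter] at hz
    have hz' : z ∈ ⋂ s : { s : Set Q // IsClopen s ∧ x₀ ∈ s }, (s : Set Q) :=
      mem_iInter.2 fun s => (hz s).1
    exact (hz ⟨univ, isClopen_univ, mem_univ _⟩).2 (hsub hz')
  obtain ⟨u, hu⟩ := isCompact_univ.elim_finite_subfamily_closed _ hclosed hempty
  set T : Set Q := ⋂ s ∈ u, (s : Set Q) with hT
  have hTclopen : IsClopen T := isClopen_biInter_finset fun s _ => s.2.1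
  have hx₀T : x₀ ∈ T := mem_iInter₂.2 fun s _ => s.2.2
  have hTsub : T ⊆ Subtype.val ⁻¹' interior Q := by
    intro z hzT
    by_contra hzP
    have : z ∈ (univ : Set Q) ∩ ⋂ s ∈ u, ((s : Set Q) \ (Subtype.val ⁻¹' interior Q)) :=
      ⟨mem_univ _, mem_iInter₂.2 fun s hs => ⟨mem_iInter₂.1 hzT s hs, hzP⟩⟩
    rw [hu] at this
    exact this
  -- transfer to H
  obtain ⟨O, hO, hOT⟩ := isOpen_induced_iff.1 hTclopen.2
  refine ⟨Subtype.val '' T, (hTclopen.1.isCompact).image continuous_subtype_val, ?_, ⟨x₀, hx₀T, rfl⟩⟩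
  have hWeq : Subtype.val '' T = O ∩ interior Q := by
    apply Subset.antisymm
    · rintro x ⟨z, hzT, rfl⟩
      exact ⟨by rw [← hOT] at hzT; exact hzT, hTsub hzT⟩
    · rintro x ⟨hxO, hxint⟩
      exact ⟨⟨x, interior_subset hxint⟩, by rw [← hOT]; exact hxO, rfl⟩
  rw [hWeq]
  exact hO.inter isOpen_interior

/-- Hausdorff case of the main theorem. -/
theorem main_t2_aux {H : Type*} [Group H] [TopologicalSpace H] [IsTopologicalGroup H]
    [LocallyCompactSpace H] [T2Space H]
    (hH0 : IsCompact (connectedComponent (1 : H)))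
    (α : H ≃* H) (hα : Continuous ⇑α)
    (hcontr : ∃ U : Set H, IsCompact U ∧ ∀ M : Set H, IsCompact M →
      ∃ N : ℕ, ∀ k ≥ N, (⇑α)^[k] '' M ⊆ U) :
    ∃ V : Subgroup H, IsCompact (V : Set H) ∧ IsOpen (V : Set H) ∧
      ∀ M : Set H, IsCompact M → ∃ N : ℕ, ∀ k ≥ N, (⇑α)^[k] '' M ⊆ (V : Set H) := by
  classical
  obtain ⟨U, hUc, hUvac⟩ := hcontr
  -- basic iterate facts
  have hone : ∀ k : ℕ, (⇑α)^[k] (1 : H) = 1 := fun k => Function.iterate_fixed (map_one α) k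
  have hmul : ∀ (k : ℕ) (x y : H), (⇑α)^[k] (x * y) = (⇑α)^[k] x * (⇑α)^[k] y := by
    intro k
    induction k with
    | zero => intro x y; simp
    | succ n ih =>
      intro x y
      rw [Function.iterate_succ', comp_apply, comp_apply, comp_apply, ih, map_mul]
  have hinv : ∀ (k : ℕ) (x : H), (⇑α)^[k] x⁻¹ = ((⇑α)^[k] x)⁻¹ := by
    intro k
    induction k with
    | zero => intro x; simp
    | succ n ih =>
      intro x
      rw [Function.iterate_succ', comp_apply, comp_apply, ih, map_inv]
  have hcont : ∀ k : ℕ, Continuous ((⇑α)^[k]) := fun k => hα.iterate k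
  have h1U : (1 : H) ∈ U := by
    obtain ⟨N, hN⟩ := hUvac {1} isCompact_singleton
    have := hN N le_rfl
    exact this ⟨1, rfl, hone N⟩
  obtain ⟨N₀, hN₀⟩ := hUvac U hUc
  -- the vacuum C : compact, closed, contains 1, α-invariant
  set B : Set H := ⋃ (k : ℕ) (_ : N₀ ≤ k), (⇑α)^[k] '' U with hB
  have hBU : B ⊆ U := by
    intro x hx
    simp only [hB, mem_iUnion] at hx
    obtain ⟨k, hk, hxk⟩ := hx
    exact hN₀ k hk hxk
  set C : Set H := closure B with hCdef
  have hCU : C ⊆ U := closure_minimal hBU hUc.isClosed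
  have hCc : IsCompact C := hUc.of_isClosed_subset isClosed_closure hCU
  have h1C : (1 : H) ∈ C := subset_closure (by
    simp only [hB, mem_iUnion]
    exact ⟨N₀, le_rfl, 1, h1U, hone N₀⟩)
  have hmapC : ⇑α '' C ⊆ C := by
    refine (image_closure_subset_closure_image hα).trans (closure_mono ?_)
    intro x hx
    simp only [hB, mem_image, mem_iUnion] at hx ⊢
    obtain ⟨y, ⟨k, hk, z, hz, rfl⟩, rfl⟩ := hx
    exact ⟨k + 1, le_trans hk (Nat.le_succ k), z, hz, by
      rw [Function.iterate_succ', comp_apply]⟩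
  have hCvac : ∀ M : Set H, IsCompact M → ∃ N : ℕ, ∀ k ≥ N, (⇑α)^[k] '' M ⊆ C := by
    intro M hM
    obtain ⟨N, hN⟩ := hUvac M hM
    refine ⟨N + N₀, fun k hk => ?_⟩
    have hkeq : k = N₀ + (k - N₀) := by omega
    have hsplit : (⇑α)^[k] '' M = (⇑α)^[N₀] '' ((⇑α)^[k - N₀] '' M) := by
      rw [← image_comp, ← Function.iterate_add, ← hkeq]
    rw [hsplit]
    refine (image_mono (hN _ (by omega))).trans ?_
    refine subset_trans ?_ subset_closure
    intro x hx
    simp only [hB, mem_iUnion]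
    exact ⟨N₀, le_rfl, hx⟩
  -- powers of C
  set Cn : ℕ → Set H := fun n => (⇑α)^[n] '' C with hCn
  have hCn0 : Cn 0 = C := by simp [hCn]
  have hCnc : ∀ n, IsCompact (Cn n) := fun n => hCc.image (hcont n)
  have hCncl : ∀ n, IsClosed (Cn n) := fun n => (hCnc n).isClosed
  have hdec : ∀ n, Cn (n + 1) ⊆ Cn n := by
    intro n
    have : Cn (n + 1) = (⇑α)^[n] '' (⇑α '' C) := by
      rw [hCn, ← image_comp, ← Function.iterate_succ]
    rw [this]
    exact image_mono hmapC
  have hone_mem : ∀ n, (1 : H) ∈ Cn n := fun n => ⟨1, h1C, hone n⟩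
  have hsplitCn : ∀ m n : ℕ, Cn (m + n) = (⇑α)^[m] '' ((⇑α)^[n] '' C) := by
    intro m n
    rw [hCn, ← image_comp, ← Function.iterate_add]
  -- the limit subgroup Cinf
  obtain ⟨m₀, hm₀⟩ := hCvac (C * C) (hCc.mul hCc)
  obtain ⟨m₁, hm₁⟩ := hCvac C⁻¹ hCc.inv
  set Cinf : Set H := ⋂ n, Cn n with hCinf
  have hCinf_mul : ∀ x ∈ Cinf, ∀ y ∈ Cinf, x * y ∈ Cinf := by
    intro x hx y hy
    refine mem_iInter.2 fun n => ?_
    obtain ⟨a, ha, rfl⟩ := mem_iInter.1 hx (n + m₀)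
    obtain ⟨b, hb, rfl⟩ := mem_iInter.1 hy (n + m₀)
    have heq : (⇑α)^[n + m₀] a * (⇑α)^[n + m₀] b = (⇑α)^[n] ((⇑α)^[m₀] (a * b)) := by
      rw [← hmul, Function.iterate_add_apply]
    rw [heq]
    exact ⟨_, hm₀ m₀ le_rfl ⟨a * b, mul_mem_mul ha hb, rfl⟩, rfl⟩
  have hCinf_inv : ∀ x ∈ Cinf, x⁻¹ ∈ Cinf := by
    intro x hx
    refine mem_iInter.2 fun n => ?_
    obtain ⟨a, ha, rfl⟩ := mem_iInter.1 hx (n + m₁)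
    have heq : ((⇑α)^[n + m₁] a)⁻¹ = (⇑α)^[n] ((⇑α)^[m₁] a⁻¹) := by
      rw [← hinv, Function.iterate_add_apply]
    rw [heq]
    exact ⟨_, hm₁ m₁ le_rfl ⟨a⁻¹, inv_mem_inv.mpr ha, rfl⟩, rfl⟩
  have hCinf_one : (1 : H) ∈ Cinf := mem_iInter.2 hone_mem
  have hCinf_sub : Cinf ⊆ C := hCn0 ▸ iInter_subset Cn 0
  -- compact open neighborhood of 1
  obtain ⟨W, hWc, hWo, h1W⟩ := exists_isCompact_isOpen_one_mem_aux hH0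
  set L : Set H := Cinf * W with hL
  have hLc : IsCompact L := (hCc.of_isClosed_subset (isClosed_iInter hCncl) hCinf_sub).mul hWc
  have hLo : IsOpen L := hWo.mul_left
  have h1L : (1 : H) ∈ L := by
    have := mul_mem_mul hCinf_one h1W
    simpa using this
  have hLcl : IsClosed L := hLc.isClosed
  -- the subgroup
  set A : Set H := {g : H | (∀ x ∈ L, g * x ∈ L) ∧ (∀ x ∈ L, g⁻¹ * x ∈ L)} with hA
  have hAsubL : A ⊆ L := fun g hg => by simpa using hg.1 1 h1L
  set V : Subgroup H :=
    { carrier := A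
      one_mem' := by constructor <;> intro x hx <;> simpa using hx
      mul_mem' := by
        rintro a b ⟨ha1, ha2⟩ ⟨hb1, hb2⟩
        constructor
        · intro x hx
          rw [mul_assoc]
          exact ha1 _ (hb1 x hx)
        · intro x hx
          rw [mul_inv_rev, mul_assoc]
          exact hb2 _ (ha2 x hx)
      inv_mem' := by
        rintro a ⟨ha1, ha2⟩
        exact ⟨ha2, by simpa using ha1⟩ } with hV
  have hVA : (V : Set H) = A := rfl
  -- A is closed
  have hAclosed : IsClosed A := by
    have h1 : IsClosed {g : H | ∀ x ∈ L, g * x ∈ L} := by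
      rw [show {g : H | ∀ x ∈ L, g * x ∈ L} = ⋂ x ∈ L, (fun g : H => g * x) ⁻¹' L by
        ext g; simp [mem_iInter]]
      exact isClosed_biInter fun x _ => hLcl.preimage (continuous_id.mul continuous_const)
    have h2 : IsClosed {g : H | ∀ x ∈ L, g⁻¹ * x ∈ L} := by
      rw [show {g : H | ∀ x ∈ L, g⁻¹ * x ∈ L} = ⋂ x ∈ L, (fun g : H => g⁻¹ * x) ⁻¹' L by
        ext g; simp [mem_iInter]]
      exact isClosed_biInter fun x _ => hLcl.preimage (continuous_inv.mul continuous_const)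
    exact h1.inter h2
  -- A is open
  have hAopen : IsOpen (V : Set H) := by
    obtain ⟨V₁, hV₁, hV₁L⟩ := compact_open_separated_mul_left hLc hLo subset_rfl
    apply V.isOpen_of_mem_nhds (g := 1)
    have hV₁' : V₁⁻¹ ∈ 𝓝 (1 : H) := by
      have : Continuous (fun g : H => g⁻¹) := continuous_inv
      have h := this.continuousAt (x := (1 : H))
      have := h.preimage_mem_nhds (by simpa using hV₁)
      simpa [Set.inv_preimage] using this
    refine Filter.mem_of_superset (Filter.inter_mem hV₁ hV₁') ?_
    rintro g ⟨hg1, hg2⟩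
    constructor
    · intro x hx
      exact hV₁L (mul_mem_mul hg1 hx)
    · intro x hx
      exact hV₁L (mul_mem_mul (by simpa using hg2) hx)
  -- A is compact
  have hAcompact : IsCompact (V : Set H) := hLc.of_isClosed_subset hAclosed hAsubL
  -- Cinf ⊆ A
  have hCinfA : Cinf ⊆ A := by
    intro c hc
    constructor
    · rintro x ⟨d, hd, w, hw, rfl⟩
      rw [← mul_assoc]
      exact mul_mem_mul (hCinf_mul c hc d hd) hw
    · rintro x ⟨d, hd, w, hw, rfl⟩
      rw [← mul_assoc]
      exact mul_mem_mul (hCinf_mul _ (hCinf_inv c hc) d hd) hw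
  -- some power of C is inside A
  have hstep : ∃ n, Cn n ⊆ A := by
    by_contra hcon
    push_neg at hcon
    have hne : ∀ n, (Cn n \ A).Nonempty := fun n => Set.diff_nonempty.mpr (hcon n)
    have hD : (⋂ n, (Cn n \ A)).Nonempty := by
      refine IsCompact.nonempty_iInter_of_sequence_nonempty_isCompact_isClosed _
        (fun n => diff_subset_diff_left (hdec n)) hne
        ((hCnc 0).of_isClosed_subset ((hCncl 0).sdiff hAopen) diff_subset)
        (fun n => (hCncl n).sdiff hAopen)
    obtain ⟨z, hz⟩ := hD
    have hz1 : z ∈ Cinf := mem_iInter.2 fun n => (mem_iInter.1 hz n).1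
    exact (mem_iInter.1 hz 0).2 (hCinfA hz1)
  obtain ⟨n₂, hn₂⟩ := hstep
  refine ⟨V, hAcompact, hAopen, fun M hM => ?_⟩
  obtain ⟨N, hN⟩ := hCvac M hM
  refine ⟨N + n₂, fun k hk => ?_⟩
  have hkeq : k = n₂ + (k - n₂) := by omega
  have hsplit : (⇑α)^[k] '' M = (⇑α)^[n₂] '' ((⇑α)^[k - n₂] '' M) := by
    rw [← image_comp, ← Function.iterate_add, ← hkeq]
  rw [hsplit]
  exact (image_mono (hN _ (by omega))).trans hn₂

/-- Preimages of compact sets under the separation quotient map are compact. -/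
theorem mk_preimage_isCompact_aux {X : Type*} [TopologicalSpace X]
    {s : Set (SeparationQuotient X)} (hs : IsCompact s) :
    IsCompact (SeparationQuotient.mk ⁻¹' s) := by
  refine isCompact_of_finite_subcover fun {ι} U hU hcov => ?_
  have hcov' : s ⊆ ⋃ i, SeparationQuotient.mk '' U i := by
    intro q hq
    obtain ⟨x, rfl⟩ := SeparationQuotient.surjective_mk q
    obtain ⟨i, hi⟩ := mem_iUnion.1 (hcov hq)
    exact mem_iUnion.2 ⟨i, mem_image_of_mem _ hi⟩
  obtain ⟨t, ht⟩ := hs.elim_finite_subcover _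
    (fun i => SeparationQuotient.isOpenMap_mk _ (hU i)) hcov'
  refine ⟨t, fun x hx => ?_⟩
  obtain ⟨i, hit, y, hyU, hyx⟩ := mem_iUnion₂.1 (ht hx)
  exact mem_iUnion₂.2 ⟨i, hit,
    ((SeparationQuotient.mk_eq_mk.1 hyx).mem_open_iff (hU i)).1 hyU⟩

/-- The preimage of the connected component of `mk x` is contained in the
connected component of `x`. -/
theorem mk_preimage_connectedComponent_aux {X : Type*} [TopologicalSpace X] (x : X) :
    SeparationQuotient.mk ⁻¹' (connectedComponent (SeparationQuotient.mk x)) ⊆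
      connectedComponent x := by
  have hmem : x ∈ SeparationQuotient.mk ⁻¹' (connectedComponent (SeparationQuotient.mk x)) :=
    mem_connectedComponent
  refine IsPreconnected.subset_connectedComponent ?_ hmem
  intro u v hu hv hsub ⟨a, haP, hau⟩ ⟨b, hbP, hbv⟩
  have hP : IsPreconnected (connectedComponent (SeparationQuotient.mk x)) :=
    isPreconnected_connectedComponent
  have hsub' : connectedComponent (SeparationQuotient.mk x) ⊆
      SeparationQuotient.mk '' u ∪ SeparationQuotient.mk '' v := by
    intro q hq
    obtain ⟨y, rfl⟩ := SeparationQuotient.surjective_mk q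
    rcases hsub hq with h | h
    · exact Or.inl (mem_image_of_mem _ h)
    · exact Or.inr (mem_image_of_mem _ h)
  obtain ⟨q, hqC, hqu, hqv⟩ := hP _ _ (SeparationQuotient.isOpenMap_mk _ hu)
    (SeparationQuotient.isOpenMap_mk _ hv) hsub'
    ⟨SeparationQuotient.mk a, haP, mem_image_of_mem _ hau⟩
    ⟨SeparationQuotient.mk b, hbP, mem_image_of_mem _ hbv⟩
  obtain ⟨y₁, hy₁u, rfl⟩ := hqu
  obtain ⟨y₂, hy₂v, he⟩ := hqv
  have hy₁v : y₁ ∈ v := ((SeparationQuotient.mk_eq_mk.1 he).mem_open_iff hv).1 hy₂v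
  exact ⟨y₁, hqC, hy₁u, hy₁v⟩

/-- If `H` is a non-compact locally compact group with compact identity component,
endowed with a contracting automorphism `α` (one admitting a compact vacuum subset),
then there is a vacuum subset which is a compact open subgroup. -/
theorem exists_compact_open_vacuum_subgroup
    {H : Type*} [Group H] [TopologicalSpace H] [IsTopologicalGroup H] [LocallyCompactSpace H]
    (hnc : ¬ IsCompact (Set.univ : Set H))
    (hH0 : IsCompact (connectedComponent (1 : H)))
    (α : H ≃* H) (hα : Continuous ⇑α) (hα' : Continuous ⇑α.symm)
    (hcontr : ∃ U : Set H, IsCompact U ∧ ∀ M : Set H, IsCompact M →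
      ∃ N : ℕ, ∀ k ≥ N, (⇑α)^[k] '' M ⊆ U) :
    ∃ V : Subgroup H, IsCompact (V : Set H) ∧ IsOpen (V : Set H) ∧
      ∀ M : Set H, IsCompact M → ∃ N : ℕ, ∀ k ≥ N, (⇑α)^[k] '' M ⊆ (V : Set H) := by
  classical
  obtain ⟨U, hUc, hUvac⟩ := hcontr
  haveI : IsTopologicalGroup (SeparationQuotient H) :=
    { toContinuousMul := inferInstance, toContinuousInv := inferInstance }
  haveI : LocallyCompactSpace (SeparationQuotient H) :=
    SeparationQuotient.isOpenQuotientMap_mk.locallyCompactSpace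
  -- compact identity component downstairs
  have hH0' : IsCompact (connectedComponent (1 : SeparationQuotient H)) := by
    have hsub : connectedComponent (1 : SeparationQuotient H) ⊆
        SeparationQuotient.mk '' connectedComponent (1 : H) := by
      intro q hq
      obtain ⟨x, rfl⟩ := SeparationQuotient.surjective_mk q
      exact ⟨x, mk_preimage_connectedComponent_aux 1 hq, rfl⟩
    exact (hH0.image SeparationQuotient.continuous_mk).of_isClosed_subset
      isClosed_connectedComponent hsub
  -- the induced automorphism
  have hresp : ∀ x y : H, Inseparable x y →
      SeparationQuotient.mk (α x) = SeparationQuotient.mk (α y) :=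
    fun x y h => SeparationQuotient.mk_eq_mk.2 (h.map hα)
  have hresp' : ∀ x y : H, Inseparable x y →
      SeparationQuotient.mk (α.symm x) = SeparationQuotient.mk (α.symm y) :=
    fun x y h => SeparationQuotient.mk_eq_mk.2 (h.map hα')
  set β : SeparationQuotient H ≃* SeparationQuotient H :=
    { toFun := SeparationQuotient.lift (fun x => SeparationQuotient.mk (α x)) hresp
      invFun := SeparationQuotient.lift (fun x => SeparationQuotient.mk (α.symm x)) hresp'
      left_inv := by
        intro q; obtain ⟨x, rfl⟩ := SeparationQuotient.surjective_mk q
        simp [SeparationQuotient.lift_mk]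
      right_inv := by
        intro q; obtain ⟨x, rfl⟩ := SeparationQuotient.surjective_mk q
        simp [SeparationQuotient.lift_mk]
      map_mul' := by
        intro q r
        obtain ⟨x, rfl⟩ := SeparationQuotient.surjective_mk q
        obtain ⟨y, rfl⟩ := SeparationQuotient.surjective_mk r
        rw [← SeparationQuotient.mk_mul]
        simp only [SeparationQuotient.lift_mk]
        rw [map_mul, SeparationQuotient.mk_mul] } with hβdef
  have hβc : Continuous ⇑β :=
    SeparationQuotient.continuous_lift (SeparationQuotient.continuous_mk.comp hα)
  have hcomm : ∀ x : H, β (SeparationQuotient.mk x) = SeparationQuotient.mk (α x) :=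
    fun x => rfl
  have hcommk : ∀ (k : ℕ) (x : H),
      (⇑β)^[k] (SeparationQuotient.mk x) = SeparationQuotient.mk ((⇑α)^[k] x) := by
    intro k
    induction k with
    | zero => intro x; rfl
    | succ n ih =>
      intro x
      rw [Function.iterate_succ', Function.iterate_succ', comp_apply, comp_apply, ih, hcomm]
  have himg : ∀ (k : ℕ) (M : Set H),
      (⇑β)^[k] '' (SeparationQuotient.mk '' M) = SeparationQuotient.mk '' ((⇑α)^[k] '' M) := by
    intro k M
    rw [← image_comp, ← image_comp]
    exact image_congr' (fun x => hcommk k x)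
  -- contraction downstairs
  have hcontr' : ∃ U' : Set (SeparationQuotient H), IsCompact U' ∧
      ∀ M' : Set (SeparationQuotient H), IsCompact M' →
        ∃ N : ℕ, ∀ k ≥ N, (⇑β)^[k] '' M' ⊆ U' := by
    refine ⟨SeparationQuotient.mk '' U, hUc.image SeparationQuotient.continuous_mk, ?_⟩
    intro M' hM'
    obtain ⟨N, hN⟩ := hUvac _ (mk_preimage_isCompact_aux hM')
    refine ⟨N, fun k hk => ?_⟩
    have hM'eq : M' ⊆ SeparationQuotient.mk '' (SeparationQuotient.mk ⁻¹' M') := by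
      intro q hq
      obtain ⟨x, rfl⟩ := SeparationQuotient.surjective_mk q
      exact mem_image_of_mem _ hq
    calc (⇑β)^[k] '' M' ⊆ (⇑β)^[k] '' (SeparationQuotient.mk ''
          (SeparationQuotient.mk ⁻¹' M')) := image_mono hM'eq
      _ = SeparationQuotient.mk '' ((⇑α)^[k] '' (SeparationQuotient.mk ⁻¹' M')) := himg _ _
      _ ⊆ SeparationQuotient.mk '' U := image_mono (hN k hk)
  obtain ⟨V', hV'c, hV'o, hV'vac⟩ := main_t2_aux hH0' β hβc hcontr'
  refine ⟨V'.comap (SeparationQuotient.mkMonoidHom), ?_, ?_, ?_⟩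
  · have : ((V'.comap (SeparationQuotient.mkMonoidHom) : Subgroup H) : Set H) =
        SeparationQuotient.mk ⁻¹' (V' : Set (SeparationQuotient H)) := rfl
    rw [this]
    exact mk_preimage_isCompact_aux hV'c
  · exact hV'o.preimage SeparationQuotient.continuous_mk
  · intro M hM
    obtain ⟨N, hN⟩ := hV'vac (SeparationQuotient.mk '' M)
      (hM.image SeparationQuotient.continuous_mk)
    refine ⟨N, fun k hk => ?_⟩
    rintro x ⟨y, hy, rfl⟩
    have : SeparationQuotient.mk ((⇑α)^[k] y) ∈ (V' : Set (SeparationQuotient H)) := by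
      rw [← hcommk]
      exact hN k hk ⟨SeparationQuotient.mk y, mem_image_of_mem _ hy, rfl⟩
    exact this
end

section
/- Let G be a finite-dimensional real Lie group with finitely many connected components such that every compact normal subgroup of G is trivial. Then every compact subgroup of G that centralizes the identity component G₀ is trivial. -/
open scoped Pointwise
open scoped commutatorElement

private lemma commutator_mul_central_left {Γ : Type*} [Group Γ] (a c z : Γ)
    (hz : ∀ g, g * z = z * g) : ⁅a * z, c⁆ = ⁅a, c⁆ := by
  simp only [commutatorElement_def, mul_inv_rev, mul_assoc]
  rw [← mul_assoc z c, ← hz c, mul_assoc c z, mul_inv_cancel_left]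

private lemma commutator_mul_central_right {Γ : Type*} [Group Γ] (a c w : Γ)
    (hw : ∀ g, g * w = w * g) : ⁅a, c * w⁆ = ⁅a, c⁆ := by
  simp only [commutatorElement_def, mul_inv_rev, mul_assoc]
  rw [← mul_assoc w a⁻¹, ← hw a⁻¹, mul_assoc a⁻¹ w, mul_inv_cancel_left]

/-- If the center has finite quotient, then the set of commutators is finite. -/
private lemma aux_finite_commutatorSet {Γ : Type*} [Group Γ]
    [Finite (Γ ⧸ Subgroup.center Γ)] : Finite (commutatorSet Γ) := by
  let F : Γ ⧸ Subgroup.center Γ → Γ ⧸ Subgroup.center Γ → Γ := fun x y =>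
    Quotient.liftOn₂' x y (fun a b => ⁅a, b⁆) (by
      intro a₁ b₁ a₂ b₂ h₁ h₂
      rw [QuotientGroup.leftRel_apply] at h₁ h₂
      show ⁅a₁, b₁⁆ = ⁅a₂, b₂⁆
      have e1 : a₂ = a₁ * (a₁⁻¹ * a₂) := (mul_inv_cancel_left a₁ a₂).symm
      have e2 : b₂ = b₁ * (b₁⁻¹ * b₂) := (mul_inv_cancel_left b₁ b₂).symm
      rw [e1, e2, commutator_mul_central_right _ _ _ (Subgroup.mem_center_iff.1 h₂),
        commutator_mul_central_left _ _ _ (Subgroup.mem_center_iff.1 h₁)])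
  have hsub : commutatorSet Γ ⊆
      Set.range (fun p : (Γ ⧸ Subgroup.center Γ) × (Γ ⧸ Subgroup.center Γ) => F p.1 p.2) := by
    rintro x ⟨g₁, g₂, rfl⟩
    exact ⟨(QuotientGroup.mk g₁, QuotientGroup.mk g₂), rfl⟩
  exact ((Set.finite_range _).subset hsub).to_subtype

/-- In a commutative group, an element of a finite supremum of subgroups is a product. -/
private lemma aux_mem_biSup_prod {A : Type*} [CommGroup A] {ι : Type*}
    (s : Finset ι) (B : ι → Subgroup A) :
    ∀ x ∈ ⨆ i ∈ s, B i, ∃ f : ι → A, (∀ i, f i ∈ B i) ∧ x = ∏ i ∈ s, f i := by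
  classical
  induction s using Finset.induction_on with
  | empty =>
    intro x hx
    have h0 : (⨆ i ∈ (∅ : Finset ι), B i) = ⊥ := by simp
    rw [h0, Subgroup.mem_bot] at hx
    exact ⟨fun _ => 1, fun i => one_mem _, by simp [hx]⟩
  | @insert a s ha ih =>
    intro x hx
    rw [Finset.iSup_insert] at hx
    obtain ⟨y, hy, z, hz, rfl⟩ := Subgroup.mem_sup.1 hx
    obtain ⟨f, hf, rfl⟩ := ih z hz
    refine ⟨Function.update f a y, ?_, ?_⟩
    · intro i
      rcases eq_or_ne i a with rfl | hne
      · simpa using hy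
      · simpa [Function.update_of_ne hne] using hf i
    · rw [Finset.prod_insert ha, Function.update_self]
      congr 1
      exact Finset.prod_congr rfl fun i hi =>
        (Function.update_of_ne (ne_of_mem_of_not_mem hi ha) y f).symm

/-- Let `G` be a finite-dimensional real Lie group with finitely many connected
components such that every compact normal subgroup of `G` is trivial. Then every
compact subgroup of `G` centralizing the identity component `G₀` is trivial. -/
theorem compact_subgroup_centralizing_identityComponent_trivial
    {E : Type*} [NormedAddCommGroup E] [NormedSpace ℝ E] [FiniteDimensional ℝ E]
    {G : Type*} [Group G] [TopologicalSpace G] [IsTopologicalGroup G] [ChartedSpace E G]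
    [LieGroup (modelWithCornersSelf ℝ E) (⊤ : ℕ∞) G]
    [Finite (ConnectedComponents G)]
    (htriv : ∀ N : Subgroup G, N.Normal → IsCompact (N : Set G) → N = ⊥) :
    ∀ K : Subgroup G, IsCompact (K : Set G) →
      (∀ k ∈ K, ∀ g ∈ connectedComponent (1 : G), k * g = g * k) → K = ⊥ := by
  classical
  intro K hKcomp hKcomm
  -- the identity component as a subgroup
  set G₀ : Subgroup G := Subgroup.connectedComponentOfOne G with hG₀def
  -- conjugation preserves the identity component
  have hconjG₀ : ∀ g x : G, x ∈ connectedComponent (1 : G) →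
      g * x * g⁻¹ ∈ connectedComponent (1 : G) := by
    intro g x hx
    have hc : Continuous fun y : G => g * y * g⁻¹ :=
      (continuous_const.mul continuous_id).mul continuous_const
    have h2 := hc.mapsTo_connectedComponent (1 : G) hx
    simp only [mul_one, mul_inv_cancel] at h2
    exact h2
  have htrans : ∀ a b : G, connectedComponent a = connectedComponent b →
      a⁻¹ * b ∈ connectedComponent (1 : G) := by
    intro a b h
    have hb : b ∈ connectedComponent a := h ▸ mem_connectedComponent
    have h2 := (continuous_mul_left a⁻¹).mapsTo_connectedComponent a hb
    simp only [inv_mul_cancel] at h2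
    exact h2
  haveI hG₀norm : G₀.Normal := ⟨fun n hn g => hconjG₀ g n hn⟩
  -- the centralizer of the identity component
  set C : Subgroup G := Subgroup.centralizer (connectedComponent (1 : G)) with hCdef
  have hKC : ∀ k ∈ K, k ∈ C :=
    fun k hk => Subgroup.mem_centralizer_iff.2 fun h hh => (hKcomm k hk h hh).symm
  have hconjC : ∀ g k : G, k ∈ K → g * k * g⁻¹ ∈ C := by
    intro g k hk
    rw [hCdef, Subgroup.mem_centralizer_iff]
    intro h hh
    have hh' : g⁻¹ * h * g ∈ connectedComponent (1 : G) := by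
      have := hconjG₀ g⁻¹ h hh; rwa [inv_inv] at this
    obtain ⟨w, hwmem, hweq⟩ : ∃ w ∈ connectedComponent (1 : G), h = g * w * g⁻¹ :=
      ⟨g⁻¹ * h * g, hh', by group⟩
    subst hweq
    have hcw := hKcomm k hk w hwmem
    calc (g * w * g⁻¹) * (g * k * g⁻¹) = g * (w * k) * g⁻¹ := by group
      _ = g * (k * w) * g⁻¹ := by rw [← hcw]
      _ = (g * k * g⁻¹) * (g * w * g⁻¹) := by group
  haveI hCnorm : C.Normal := by
    constructor
    intro c hc g
    rw [hCdef, Subgroup.mem_centralizer_iff] at hc ⊢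
    intro h hh
    have hh' : g⁻¹ * h * g ∈ connectedComponent (1 : G) := by
      have := hconjG₀ g⁻¹ h hh; rwa [inv_inv] at this
    obtain ⟨w, hwmem, hweq⟩ : ∃ w ∈ connectedComponent (1 : G), h = g * w * g⁻¹ :=
      ⟨g⁻¹ * h * g, hh', by group⟩
    subst hweq
    have hcw := hc w hwmem
    calc (g * w * g⁻¹) * (g * c * g⁻¹) = g * (w * c) * g⁻¹ := by group
      _ = g * (c * w) * g⁻¹ := by rw [hcw]
      _ = (g * c * g⁻¹) * (g * w * g⁻¹) := by group
  -- the quotient by the identity component is finite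
  have hmemcc : ∀ a b : G, a⁻¹ * b ∈ connectedComponent (1 : G) →
      ConnectedComponents.mk a = ConnectedComponents.mk b := by
    intro a b h
    rw [ConnectedComponents.coe_eq_coe]
    have hb : b ∈ connectedComponent a := by
      have h2 := (continuous_mul_left a).mapsTo_connectedComponent (1 : G) h
      simp only [mul_one] at h2
      rwa [mul_inv_cancel_left] at h2
    exact connectedComponent_eq hb
  have hfinQ : Finite (G ⧸ G₀) := by
    have hinj : Function.Injective
        (fun q : G ⧸ G₀ => Quotient.liftOn' q ConnectedComponents.mk
          (fun a b h => hmemcc a b (QuotientGroup.leftRel_apply.1 h))) := by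
      intro q₁ q₂
      refine Quotient.inductionOn₂' q₁ q₂ ?_
      intro a b h
      have hcc : connectedComponent a = connectedComponent b :=
        ConnectedComponents.coe_eq_coe.1 h
      exact Quotient.sound' (QuotientGroup.leftRel_apply.2 (htrans a b hcc))
    exact Finite.of_injective _ hinj
  -- a system of representatives for the components
  haveI : Fintype (ConnectedComponents G) := Fintype.ofFinite _
  obtain ⟨rep, hrep⟩ := (ConnectedComponents.surjective_coe (α := G)).hasRightInverse
  -- the finitely many conjugates of K
  set Kc : ConnectedComponents G → Subgroup G :=
    fun i => Subgroup.map ((MulAut.conj (rep i)).toMonoidHom) K with hKcdef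
  have hKcmem : ∀ (i) (x : G), x ∈ Kc i ↔ ∃ k ∈ K, rep i * k * (rep i)⁻¹ = x := by
    intro i x
    rw [hKcdef]
    exact Subgroup.mem_map
  have hKcCompact : ∀ i, IsCompact ((Kc i : Set G)) := by
    intro i
    have hco : Continuous fun x : G => rep i * x * (rep i)⁻¹ :=
      (continuous_const.mul continuous_id).mul continuous_const
    have hcoe : ⇑((MulAut.conj (rep i)).toMonoidHom) = fun x : G => rep i * x * (rep i)⁻¹ := rfl
    rw [hKcdef, Subgroup.coe_map, hcoe]
    exact hKcomp.image hco
  have hKcC : ∀ i, Kc i ≤ C := by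
    intro i x hx
    obtain ⟨k, hk, rfl⟩ := (hKcmem i x).1 hx
    exact hconjC _ k hk
  -- every conjugate of an element of K lies in one of the Kc i
  have hcov : ∀ g k : G, k ∈ K → g * k * g⁻¹ ∈ Kc (ConnectedComponents.mk g) := by
    intro g k hk
    set r := rep (ConnectedComponents.mk g) with hrdef
    have hmk : ConnectedComponents.mk r = ConnectedComponents.mk g := hrep _
    have hcc : connectedComponent r = connectedComponent g :=
      ConnectedComponents.coe_eq_coe.1 hmk
    have hhg : r⁻¹ * g ∈ connectedComponent (1 : G) := htrans r g hcc
    have hkw : k * (r⁻¹ * g) = (r⁻¹ * g) * k := hKcomm k hk _ hhg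
    refine (hKcmem _ _).2 ⟨k, hk, ?_⟩
    calc r * k * r⁻¹ = r * (k * (r⁻¹ * g)) * g⁻¹ := by group
      _ = r * ((r⁻¹ * g) * k) * g⁻¹ := by rw [hkw]
      _ = g * k * g⁻¹ := by group
  -- the normal closure of K
  set N : Subgroup G := Subgroup.normalClosure (K : Set G) with hNdef
  haveI hNnorm : N.Normal := Subgroup.normalClosure_normal
  have hNC : N ≤ C := Subgroup.normalClosure_le_normal (fun k hk => hKC k hk)
  -- abelianization of the centralizer
  set φ : ↥C →* Abelianization ↥C := Abelianization.of with hφdef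
  set BS : Subgroup (Abelianization ↥C) :=
    ⨆ i ∈ (Finset.univ : Finset (ConnectedComponents G)),
      Subgroup.map φ ((Kc i).subgroupOf C) with hBSdef
  set W : Subgroup G := Subgroup.map C.subtype (Subgroup.comap φ BS) with hWdef
  have hNW : N ≤ W := by
    rw [hNdef]
    refine (Subgroup.closure_le _).2 ?_
    intro x hx
    obtain ⟨a, haK, hconj⟩ := Group.mem_conjugatesOfSet_iff.1 hx
    obtain ⟨c, rfl⟩ := isConj_iff.1 hconj
    have hxC : c * a * c⁻¹ ∈ C := hconjC c a haK
    have hxK : c * a * c⁻¹ ∈ Kc (ConnectedComponents.mk c) := hcov c a haK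
    refine Subgroup.mem_map.2 ⟨⟨_, hxC⟩, ?_, rfl⟩
    refine Subgroup.mem_comap.2 ?_
    have hmem : φ ⟨_, hxC⟩ ∈
        Subgroup.map φ ((Kc (ConnectedComponents.mk c)).subgroupOf C) :=
      Subgroup.mem_map.2 ⟨⟨_, hxC⟩, Subgroup.mem_subgroupOf.2 hxK, rfl⟩
    rw [hBSdef]
    exact le_iSup₂ (f := fun (i : ConnectedComponents G)
      (_ : i ∈ (Finset.univ : Finset (ConnectedComponents G))) =>
      Subgroup.map φ ((Kc i).subgroupOf C)) (ConnectedComponents.mk c) (Finset.mem_univ _) hmem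
  -- the center of C has finite index
  set ψ : ↥C →* G ⧸ G₀ := (QuotientGroup.mk' G₀).comp C.subtype with hψdef
  have hkerle : ψ.ker ≤ Subgroup.center ↥C := by
    intro x hx
    have hx1 : ψ x = 1 := hx
    have hxG₀ : (x : G) ∈ connectedComponent (1 : G) :=
      (QuotientGroup.eq_one_iff (x : G)).1 hx1
    rw [Subgroup.mem_center_iff]
    intro c
    have hcx := Subgroup.mem_centralizer_iff.1 c.2 (x : G) hxG₀
    exact Subtype.ext (by simpa using hcx.symm)
  haveI : Finite (G ⧸ G₀) := hfinQ
  haveI : Finite (↥C ⧸ ψ.ker) :=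
    Finite.of_injective _ (QuotientGroup.kerLift_injective ψ)
  haveI hkerfi : ψ.ker.FiniteIndex := Subgroup.finiteIndex_of_finite_quotient
  haveI : (Subgroup.center ↥C).FiniteIndex := Subgroup.finiteIndex_of_le hkerle
  haveI : Finite (↥C ⧸ Subgroup.center ↥C) := Subgroup.finite_quotient_of_finiteIndex
  haveI : Finite (commutatorSet ↥C) := aux_finite_commutatorSet
  haveI : Finite (_root_.commutator ↥C) := inferInstance
  -- the finite set of commutators and the compact product set
  set Tset : Set G := C.subtype '' ((_root_.commutator ↥C : Subgroup ↥C) : Set ↥C) with hTdef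
  have hTfin : Tset.Finite := Set.Finite.image _ (Set.toFinite _)
  set l : List (ConnectedComponents G) := Finset.univ.toList with hldef
  set Pset : Set G := (fun f : ConnectedComponents G → G => (l.map f).prod) ''
      (Set.univ.pi fun i => ((Kc i : Set G))) with hPdef
  have hPcomp : IsCompact Pset := by
    rw [hPdef]
    exact IsCompact.image (isCompact_univ_pi fun i => hKcCompact i)
      (continuous_list_prod _ fun i _ => continuous_apply i)
  -- N is contained in the compact set Tset * Pset
  have hsub : (N : Set G) ⊆ Tset * Pset := by
    intro x hxN
    have hxW : x ∈ W := hNW hxN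
    obtain ⟨c, hc, rfl⟩ := Subgroup.mem_map.1 hxW
    have hcBS : φ c ∈ BS := Subgroup.mem_comap.1 hc
    rw [hBSdef] at hcBS
    obtain ⟨f, hf, hfeq⟩ := aux_mem_biSup_prod Finset.univ _ (φ c) hcBS
    choose k' hk' hk'eq using fun i => Subgroup.mem_map.1 (hf i)
    set p : ↥C := (l.map k').prod with hpdef
    have hφp : φ p = φ c := by
      rw [hpdef, map_list_prod, List.map_map]
      have hcongr : l.map (⇑φ ∘ k') = l.map f := by
        apply List.map_congr_left
        intro i _
        exact hk'eq i
      rw [hcongr, hldef, Finset.prod_map_toList, ← hfeq]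
    have hdcomm : c * p⁻¹ ∈ _root_.commutator ↥C := by
      have h1 : φ (c * p⁻¹) = 1 := by
        rw [map_mul, map_inv, hφp, mul_inv_cancel]
      exact (QuotientGroup.eq_one_iff (c * p⁻¹)).1 h1
    have hsplit : C.subtype c = C.subtype (c * p⁻¹) * C.subtype p := by
      rw [← map_mul, inv_mul_cancel_right]
    rw [hsplit]
    refine Set.mul_mem_mul ?_ ?_
    · exact ⟨c * p⁻¹, hdcomm, rfl⟩
    · refine ⟨fun i => ((k' i : G)), Set.mem_univ_pi.2 fun i =>
        Subgroup.mem_subgroupOf.1 (hk' i), ?_⟩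
      show (l.map fun i => ((k' i : G))).prod = C.subtype p
      rw [hpdef, map_list_prod, List.map_map]
      rfl
  -- conclude via the topological closure of N
  have hTP : IsCompact (Tset * Pset) := hTfin.isCompact.mul hPcomp
  have hNclcomp : IsCompact ((N.topologicalClosure : Subgroup G) : Set G) := by
    have : ((N.topologicalClosure : Subgroup G) : Set G) = closure (N : Set G) := rfl
    rw [this]
    exact IsCompact.of_isClosed_subset hTP.closure isClosed_closure (closure_mono hsub)
  haveI hnorm2 : N.topologicalClosure.Normal := Subgroup.is_normal_topologicalClosure N
  have hbot := htriv _ hnorm2 hNclcomp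
  have hKle : K ≤ N.topologicalClosure :=
    le_trans Subgroup.le_normalClosure (Subgroup.le_topologicalClosure N)
  rw [hbot] at hKle
  exact le_bot_iff.1 hKle
end

section
/- Let H be a non-compact locally compact group whose identity component H₀ is compact. Let S be a locally compact group acting continuously on H by topological group automorphisms, the automorphism given by s ∈ S being denoted π(s), and suppose there exists ξ ∈ S such that the cyclic subgroup generated by ξ is infinite, discrete and cocompact in S, and the automorphism π(ξ) contracts H. Then: (i) there is a unique continuous surjective group homomorphism p : S → ℤ with p(ξ) > 0, and its kernel W = Ker(p) is compact; (ii) there exists a compact open subgroup Ω of H such that π(w)Ω = Ω for every w ∈ W, π(s)Ω ⊆ Ω for every s ∈ S with p(s) ≥ 0, and for every compact subset K ⊆ H there exists k ∈ ℕ such that π(s)K ⊆ Ω whenever p(s) ≥ k. -/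
open Set Function

namespace ContractionAux

/-- Preimage of a compact set under the separation quotient map is compact. -/
lemma sq_preimage_compact {X : Type*} [TopologicalSpace X]
    {C : Set (SeparationQuotient X)} (hC : IsCompact C) :
    IsCompact (SeparationQuotient.mk ⁻¹' C) := by
  rw [isCompact_iff_finite_subcover]
  intro ι U hU hcov
  have hcov' : C ⊆ ⋃ i, SeparationQuotient.mk '' U i := by
    rintro c hc
    obtain ⟨x, rfl⟩ := SeparationQuotient.surjective_mk c
    obtain ⟨i, hi⟩ := mem_iUnion.mp (hcov hc)
    exact mem_iUnion.mpr ⟨i, mem_image_of_mem _ hi⟩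
  obtain ⟨t, ht⟩ := hC.elim_finite_subcover _
    (fun i => SeparationQuotient.isOpenMap_mk _ (hU i)) hcov'
  refine ⟨t, fun x hx => ?_⟩
  obtain ⟨i, hit, hxi⟩ := mem_iUnion₂.mp (ht hx)
  have hx2 : x ∈ SeparationQuotient.mk ⁻¹' (SeparationQuotient.mk '' U i) := hxi
  rw [SeparationQuotient.preimage_image_mk_open (hU i)] at hx2
  exact mem_iUnion₂.mpr ⟨i, hit, hx2⟩

/-- Preimage of a preconnected set under the separation quotient map is preconnected. -/
lemma sq_preimage_preconnected {X : Type*} [TopologicalSpace X]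
    {C : Set (SeparationQuotient X)} (hC : IsPreconnected C) :
    IsPreconnected (SeparationQuotient.mk ⁻¹' C) := by
  intro u v hu hv hcov ⟨a, haC, hau⟩ ⟨b, hbC, hbv⟩
  have himg : ∀ {s : Set X} {x : X}, IsOpen s → SeparationQuotient.mk x ∈ SeparationQuotient.mk '' s
      → x ∈ s := by
    intro s x hs hx
    obtain ⟨y, hy, hyx⟩ := hx
    rw [← SeparationQuotient.preimage_image_mk_open hs]
    exact mem_preimage.mpr (hyx ▸ mem_image_of_mem _ hy)
  have hC' : C ⊆ SeparationQuotient.mk '' u ∪ SeparationQuotient.mk '' v := by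
    rintro c hc
    obtain ⟨x, rfl⟩ := SeparationQuotient.surjective_mk c
    rcases hcov hc with h | h
    · exact Or.inl (mem_image_of_mem _ h)
    · exact Or.inr (mem_image_of_mem _ h)
  obtain ⟨c, hcC, hcu, hcv⟩ := hC _ _ (SeparationQuotient.isOpenMap_mk _ hu)
    (SeparationQuotient.isOpenMap_mk _ hv) hC'
    ⟨SeparationQuotient.mk a, haC, mem_image_of_mem _ hau⟩
    ⟨SeparationQuotient.mk b, hbC, mem_image_of_mem _ hbv⟩
  obtain ⟨x, rfl⟩ := SeparationQuotient.surjective_mk c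
  exact ⟨x, hcC, himg hu hcu, himg hv hcv⟩

variable {H : Type*} [Group H] [TopologicalSpace H] [IsTopologicalGroup H]

/-- In a Hausdorff locally compact group with compact identity component there is a
compact open subgroup. -/
lemma exists_compactOpen_subgroup_t2 [T2Space H] [LocallyCompactSpace H]
    (hH0 : IsCompact (connectedComponent (1 : H))) :
    ∃ V : Subgroup H, IsCompact (V : Set H) ∧ IsOpen (V : Set H) := by
  classical
  -- compact neighborhood of the identity component
  obtain ⟨t, htmem, htcov⟩ := hH0.elim_nhds_subcover
    (fun x => interior (Classical.choose (exists_compact_mem_nhds x)))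
    (fun x _ => isOpen_interior.mem_nhds (mem_interior_iff_mem_nhds.mpr
      (Classical.choose_spec (exists_compact_mem_nhds x)).2))
  set W : Set H := ⋃ x ∈ t, interior (Classical.choose (exists_compact_mem_nhds x)) with hW
  set KK : Set H := ⋃ x ∈ t, Classical.choose (exists_compact_mem_nhds x) with hKK
  have hWopen : IsOpen W := isOpen_biUnion fun x _ => isOpen_interior
  have hKKcomp : IsCompact KK := t.finite_toSet.isCompact_biUnion
    (fun x _ => (Classical.choose_spec (exists_compact_mem_nhds x)).1)
  have hWKK : W ⊆ KK := iUnion₂_mono fun x _ => interior_subset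
  have h1W : (1 : H) ∈ W := htcov mem_connectedComponent
  -- work in the compact subspace KK
  haveI : CompactSpace KK := isCompact_iff_compactSpace.mp hKKcomp
  set e : KK := ⟨1, hWKK h1W⟩
  have hcompW : connectedComponent e ⊆ (Subtype.val) ⁻¹' W := by
    intro y hy
    have h1 : Subtype.val '' connectedComponent e ⊆ connectedComponent (1 : H) := by
      apply IsPreconnected.subset_connectedComponent
        (isPreconnected_connectedComponent.image _ continuous_subtype_val.continuousOn)
      exact ⟨e, mem_connectedComponent, rfl⟩
    exact htcov (h1 (mem_image_of_mem _ hy))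
  -- clopen set between component and W
  have hiInter := connectedComponent_eq_iInter_isClopen e
  have hempty : (univ : Set KK) ∩ ⋂ s : { s : Set KK // IsClopen s ∧ e ∈ s },
      (s.1 ∩ ((Subtype.val) ⁻¹' W)ᶜ) = ∅ := by
    rw [eq_empty_iff_forall_notMem]
    rintro y ⟨-, hy⟩
    rw [mem_iInter] at hy
    have hy' : y ∈ connectedComponent e := by
      rw [hiInter, mem_iInter]; exact fun s => (hy s).1
    exact (hy ⟨_, isClopen_univ, mem_univ _⟩).2 (hcompW hy')
  obtain ⟨u, hu⟩ := isCompact_univ.elim_finite_subfamily_closed _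
    (fun s : { s : Set KK // IsClopen s ∧ e ∈ s } =>
      (s.2.1.isClosed.inter (hWopen.preimage continuous_subtype_val).isClosed_compl)) hempty
  set A : Set KK := ⋂ s ∈ u, (s : { s : Set KK // IsClopen s ∧ e ∈ s }).1 with hA
  have hAclopen : IsClopen A := isClopen_biInter_finset fun s _ => s.2.1
  have heA : e ∈ A := mem_iInter₂.mpr fun s _ => s.2.2
  have hAW : A ⊆ (Subtype.val) ⁻¹' W := by
    intro y hy
    by_contra hyW
    have : y ∈ (univ : Set KK) ∩ ⋂ s ∈ u,
        ((s : { s : Set KK // IsClopen s ∧ e ∈ s }).1 ∩ ((Subtype.val) ⁻¹' W)ᶜ) := by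
      refine ⟨mem_univ _, mem_iInter₂.mpr fun s hs => ⟨mem_iInter₂.mp hy s hs, hyW⟩⟩
    rw [hu] at this
    exact this
  -- B : compact open subset of H containing 1
  obtain ⟨O, hOopen, hAO⟩ := isOpen_induced_iff.mp hAclopen.2
  set B : Set H := O ∩ W with hB
  have hBopen : IsOpen B := hOopen.inter hWopen
  have hBeq : Subtype.val '' A = B := by
    apply Subset.antisymm
    · rintro x ⟨y, hy, rfl⟩
      exact ⟨by rw [← hAO] at hy; exact hy, hAW hy⟩
    · rintro x ⟨hxO, hxW⟩
      exact ⟨⟨x, hWKK hxW⟩, by rw [← hAO]; exact hxO, rfl⟩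
  have hBcomp : IsCompact B := by
    rw [← hBeq]
    exact (hAclopen.isClosed.isCompact).image continuous_subtype_val
  have h1B : (1 : H) ∈ B := by rw [← hBeq]; exact mem_image_of_mem _ heA
  -- from a compact open set containing 1 to a compact open subgroup
  have hmul : IsOpen ((fun p : H × H => p.1 * p.2) ⁻¹' B) := hBopen.preimage continuous_mul
  have hsub : {(1 : H)} ×ˢ B ⊆ (fun p : H × H => p.1 * p.2) ⁻¹' B := by
    rintro ⟨g, b⟩ ⟨hg, hb⟩
    simp only [mem_singleton_iff] at hg
    simpa [hg] using hb
  obtain ⟨u', v', hu'open, -, h1u', hBv', huv⟩ :=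
    generalized_tube_lemma isCompact_singleton hBcomp hmul hsub
  set O' : Set H := u' ∩ (fun g : H => g⁻¹) ⁻¹' u' with hO'
  have hO'open : IsOpen O' := hu'open.inter (hu'open.preimage continuous_inv)
  have h1O' : (1 : H) ∈ O' := ⟨h1u' rfl, by simpa using h1u' rfl⟩
  have hstep : ∀ g ∈ u', ∀ b ∈ B, g * b ∈ B := fun g hg b hb =>
    huv (mk_mem_prod hg (hBv' hb))
  set V : Subgroup H := Subgroup.closure O' with hV
  have hVB : ∀ g ∈ V, (∀ b ∈ B, g * b ∈ B) ∧ (∀ b ∈ B, g⁻¹ * b ∈ B) := by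
    intro g hg
    induction hg using Subgroup.closure_induction with
    | mem x hx => exact ⟨hstep x hx.1, hstep x⁻¹ hx.2⟩
    | one => simpa using ⟨fun b hb => hb, fun b hb => hb⟩
    | mul x y _ _ hx hy =>
        refine ⟨fun b hb => ?_, fun b hb => ?_⟩
        · rw [mul_assoc]; exact hx.1 _ (hy.1 b hb)
        · rw [mul_inv_rev, mul_assoc]; exact hy.2 _ (hx.2 b hb)
    | inv x _ hx => exact ⟨fun b hb => by simpa using hx.2 b hb, fun b hb => by
        simpa using hx.1 b hb⟩
  have hVsub : (V : Set H) ⊆ B := fun g hg => by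
    simpa using (hVB g hg).1 1 h1B
  have hVopen : IsOpen (V : Set H) :=
    V.isOpen_of_mem_nhds (Filter.mem_of_superset (hO'open.mem_nhds h1O')
      Subgroup.subset_closure)
  exact ⟨V, hBcomp.of_isClosed_subset (V.isClosed_of_isOpen hVopen) hVsub, hVopen⟩

/-- A locally compact group with compact identity component has a compact open subgroup. -/
lemma exists_compactOpen_subgroup [LocallyCompactSpace H]
    (hH0 : IsCompact (connectedComponent (1 : H))) :
    ∃ V : Subgroup H, IsCompact (V : Set H) ∧ IsOpen (V : Set H) := by
  haveI : IsTopologicalGroup (SeparationQuotient H) := ⟨⟩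
  haveI : LocallyCompactSpace (SeparationQuotient H) :=
    SeparationQuotient.isOpenQuotientMap_mk.locallyCompactSpace
  have hpre : SeparationQuotient.mk ⁻¹' (connectedComponent (1 : SeparationQuotient H)) ⊆
      connectedComponent (1 : H) := by
    apply IsPreconnected.subset_connectedComponent
      (sq_preimage_preconnected isPreconnected_connectedComponent)
    have : SeparationQuotient.mk (1 : H) ∈ connectedComponent (1 : SeparationQuotient H) := by
      rw [SeparationQuotient.mk_one]; exact mem_connectedComponent
    exact this
  have hsub : connectedComponent (1 : SeparationQuotient H) ⊆
      SeparationQuotient.mk '' connectedComponent (1 : H) := by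
    intro c hc
    obtain ⟨x, rfl⟩ := SeparationQuotient.surjective_mk c
    exact mem_image_of_mem _ (hpre hc)
  have hcomp : IsCompact (connectedComponent (1 : SeparationQuotient H)) :=
    (hH0.image SeparationQuotient.continuous_mk).of_isClosed_subset
      isClosed_connectedComponent hsub
  obtain ⟨V', hV'c, hV'o⟩ := exists_compactOpen_subgroup_t2 hcomp
  refine ⟨Subgroup.comap (SeparationQuotient.mkMonoidHom : H →* SeparationQuotient H) V', ?_, ?_⟩
  · exact sq_preimage_compact hV'c
  · exact hV'o.preimage SeparationQuotient.continuous_mk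

end ContractionAux


open Set Function Filter Pointwise

namespace ContractionAux2

variable {H : Type*} [Group H] [TopologicalSpace H] [IsTopologicalGroup H]

/-- Core dynamical construction: given a contracting automorphism (with compact vacuum `U`)
and a compact open subgroup `V`, there is a compact open subgroup `Ω` with `φ Ω ⊆ Ω` which
eventually swallows `U` (hence every compact set). -/
lemma exists_stable_subgroup (φ : MulAut H) (hφ : Continuous ⇑φ)
    {U : Set H} (hU : IsCompact U)
    (hvac : ∀ M : Set H, IsCompact M → ∃ N : ℕ, ∀ k ≥ N, (⇑φ)^[k] '' M ⊆ U)
    (V : Subgroup H) (hVc : IsCompact (V : Set H)) (hVo : IsOpen (V : Set H)) :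
    ∃ Ω : Subgroup H, IsCompact (Ω : Set H) ∧ IsOpen (Ω : Set H) ∧
      (∀ x ∈ Ω, φ x ∈ Ω) ∧ (∃ M : ℕ, ∀ m ≥ M, (⇑φ)^[m] '' U ⊆ (Ω : Set H)) := by
  classical
  set f : H → H := ⇑φ with hf
  have hfmul : ∀ (n : ℕ) (x y : H), f^[n] (x * y) = f^[n] x * f^[n] y :=
    fun n x y => iterate_map_mul φ n x y
  have hfone : ∀ n : ℕ, f^[n] (1 : H) = 1 := fun n => iterate_map_one φ n
  have hfinv : ∀ (n : ℕ) (x : H), f^[n] x⁻¹ = (f^[n] x)⁻¹ := fun n x => iterate_map_inv φ n x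
  have hfc : ∀ k : ℕ, Continuous (f^[k]) := fun k => hφ.iterate k
  have h1U : (1 : H) ∈ U := by
    obtain ⟨N, hN⟩ := hvac {1} isCompact_singleton
    exact hN N le_rfl ⟨1, rfl, hfone N⟩
  obtain ⟨N₁, hN₁⟩ := hvac U hU
  set UC : Set H := U ∪ ⋃ j ∈ Finset.range N₁, f^[j] '' U with hUC
  have hUCcomp : IsCompact UC :=
    hU.union ((Finset.range N₁).finite_toSet.isCompact_biUnion fun j _ => hU.image (hfc j))
  have hallU : ∀ a : ℕ, f^[a] '' U ⊆ UC := by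
    intro a
    rcases lt_or_ge a N₁ with h | h
    · exact fun x hx => Or.inr (mem_biUnion (Finset.mem_range.mpr h) hx)
    · exact fun x hx => Or.inl (hN₁ a h hx)
  set T : ℕ → Set H := fun K => ⋃ k : ℕ, f^[K + k] '' U with hT
  have hTmem : ∀ {K a : ℕ}, K ≤ a → f^[a] '' U ⊆ T K := by
    intro K a hKa
    have h : f^[a] '' U = f^[K + (a - K)] '' U := by rw [Nat.add_sub_cancel' hKa]
    rw [h]
    exact subset_iUnion (fun k => f^[K + k] '' U) (a - K)
  have hTsub : ∀ K, T K ⊆ UC := fun K => iUnion_subset fun k => hallU _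
  set Λ : Set H := ⋂ K : ℕ, closure (T K) with hΛ
  have hΛcomp : IsCompact Λ := ((hUCcomp.closure).of_isClosed_subset
    (isClosed_iInter fun K => isClosed_closure)
    ((iInter_subset _ 0).trans (closure_mono (hTsub 0))))
  have h1Λ : (1 : H) ∈ Λ := mem_iInter.mpr fun K =>
    subset_closure (hTmem le_rfl ⟨1, h1U, hfone _⟩)
  -- Λ is closed under multiplication
  obtain ⟨N₂, hN₂⟩ := hvac (UC * UC) (hUCcomp.mul hUCcomp)
  have hkey : ∀ (K a b : ℕ), K + N₂ ≤ a → K + N₂ ≤ b → ∀ x ∈ U, ∀ y ∈ U,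
      f^[a] x * f^[b] y ∈ T K := by
    have main : ∀ (K a b : ℕ), K + N₂ ≤ a → a ≤ b → ∀ x ∈ U, ∀ y ∈ U,
        f^[a] x * f^[b] y ∈ T K := by
      intro K a b ha hab x hx y hy
      have hb : f^[b] y = f^[a] (f^[b - a] y) := by
        rw [← Function.iterate_add_apply, Nat.add_sub_cancel' hab]
      rw [hb, ← hfmul a x (f^[b - a] y)]
      have hmem : x * f^[b - a] y ∈ UC * UC :=
        Set.mul_mem_mul (Or.inl hx) (hallU (b - a) ⟨y, hy, rfl⟩)
      have h2 : f^[a] '' (UC * UC) ⊆ f^[K] '' U := by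
        rw [show a = K + (a - K) by omega, Function.iterate_add, Set.image_comp]
        exact Set.image_mono (hN₂ _ (by omega))
      exact hTmem le_rfl (h2 ⟨_, hmem, rfl⟩)
    intro K a b ha hb x hx y hy
    rcases le_total a b with h | h
    · exact main K a b ha h x hx y hy
    · -- symmetric case
      have hb' : f^[a] x = f^[b] (f^[a - b] x) := by
        rw [← Function.iterate_add_apply, Nat.add_sub_cancel' h]
      rw [hb', ← hfmul b (f^[a - b] x) y]
      have hmem : f^[a - b] x * y ∈ UC * UC :=
        Set.mul_mem_mul (hallU (a - b) ⟨x, hx, rfl⟩) (Or.inl hy)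
      have h2 : f^[b] '' (UC * UC) ⊆ f^[K] '' U := by
        rw [show b = K + (b - K) by omega, Function.iterate_add, Set.image_comp]
        exact Set.image_mono (hN₂ _ (by omega))
      exact hTmem le_rfl (h2 ⟨_, hmem, rfl⟩)
  have hTT : ∀ K, T (K + N₂) * T (K + N₂) ⊆ T K := by
    intro K z hz
    rw [Set.mem_mul] at hz
    obtain ⟨x, hx, y, hy, rfl⟩ := hz
    obtain ⟨i, x', hx', rfl⟩ := by simpa only [hT, mem_iUnion, mem_image] using hx
    obtain ⟨j, y', hy', rfl⟩ := by simpa only [hT, mem_iUnion, mem_image] using hy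
    exact hkey K _ _ (by omega) (by omega) x' hx' y' hy'
  have hΛmul : ∀ x ∈ Λ, ∀ y ∈ Λ, x * y ∈ Λ := by
    intro x hx y hy
    rw [hΛ, mem_iInter]
    intro K
    have hx' : x ∈ closure (T (K + N₂)) := mem_iInter.mp hx (K + N₂)
    have hy' : y ∈ closure (T (K + N₂)) := mem_iInter.mp hy (K + N₂)
    have hxy : x * y ∈ closure (T (K + N₂)) * closure (T (K + N₂)) :=
      Set.mul_mem_mul hx' hy'
    have hsub : closure (T (K + N₂)) * closure (T (K + N₂)) ⊆
        closure (T (K + N₂) * T (K + N₂)) := by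
      rw [← Set.image_mul_prod, ← Set.image_mul_prod, ← closure_prod_eq]
      exact image_closure_subset_closure_image continuous_mul
    exact closure_mono (hTT K) (hsub hxy)
  -- Λ is closed under inverses
  obtain ⟨N₃, hN₃⟩ := hvac UC⁻¹ hUCcomp.inv
  have hΛinv : ∀ x ∈ Λ, x⁻¹ ∈ Λ := by
    intro x hx
    rw [hΛ, mem_iInter]
    intro K
    have hx' : x ∈ closure (T (K + N₃)) := mem_iInter.mp hx (K + N₃)
    have hxi : x⁻¹ ∈ (closure (T (K + N₃)))⁻¹ := Set.inv_mem_inv.mpr hx'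
    have h1 : (closure (T (K + N₃)))⁻¹ = closure ((T (K + N₃))⁻¹) := by
      rw [inv_closure]
    have h2 : (T (K + N₃))⁻¹ ⊆ T K := by
      intro z hz
      rw [Set.mem_inv] at hz
      obtain ⟨i, z', hz', hzz⟩ := by simpa only [hT, mem_iUnion, mem_image] using hz
      have hzeq : z = f^[K + N₃ + i] z'⁻¹ := by
        rw [hfinv, hzz]; simp
      have hmem : z ∈ f^[K + N₃ + i] '' UC⁻¹ :=
        ⟨z'⁻¹, Set.inv_mem_inv.mpr (Or.inl hz'), hzeq.symm⟩
      have h3 : f^[K + N₃ + i] '' UC⁻¹ ⊆ f^[K] '' U := by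
        rw [show K + N₃ + i = K + (N₃ + i) by omega, Function.iterate_add, Set.image_comp]
        exact Set.image_mono (hN₃ _ (by omega))
      exact hTmem le_rfl (h3 hmem)
    rw [h1] at hxi
    exact closure_mono h2 hxi
  -- attractor property of Λ
  have hattract : ∀ W : Set H, IsOpen W → Λ ⊆ W → ∃ N, ∀ k ≥ N, f^[k] '' U ⊆ W := by
    intro W hWo hΛW
    by_contra hcon
    push_neg at hcon
    choose g hg hg' using hcon
    choose x hx hxW using fun n => not_subset.mp (hg' n)
    set y : ℕ → H := fun n => x (n + N₁) with hy
    have hyZ : ∀ n, y n ∈ U \ W := fun n =>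
      ⟨hN₁ _ (le_trans (by omega) (hg (n + N₁))) (hx (n + N₁)), hxW (n + N₁)⟩
    have hZcomp : IsCompact (U \ W) := hU.diff hWo
    have hle : Filter.map y Filter.atTop ≤ Filter.principal (U \ W) := by
      rw [Filter.le_principal_iff, Filter.mem_map]
      exact Filter.univ_mem' hyZ
    obtain ⟨a, haZ, hacl⟩ := hZcomp.exists_clusterPt hle
    have haΛ : a ∈ Λ := by
      rw [hΛ, mem_iInter]
      intro K
      have hmem : y '' {n | K ≤ n} ∈ Filter.map y Filter.atTop :=
        Filter.image_mem_map (Filter.mem_atTop K)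
      have hcl : ClusterPt a (Filter.principal (y '' {n | K ≤ n})) :=
        hacl.mono (Filter.le_principal_iff.mpr hmem)
      have hsub : y '' {n | K ≤ n} ⊆ T K := by
        rintro z ⟨n, hn, rfl⟩
        exact hTmem (le_trans hn (le_trans (by omega) (hg (n + N₁)))) (hx (n + N₁))
      exact closure_mono hsub (mem_closure_iff_clusterPt.mpr hcl)
    exact haZ.2 (hΛW haΛ)
  -- the subgroup Q of elements whose Λ-conjugates lie in V
  set Q : Subgroup H :=
    { carrier := {x : H | ∀ l ∈ Λ, l * x * l⁻¹ ∈ V}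
      one_mem' := fun l hl => by simpa using V.one_mem
      mul_mem' := by
        intro x y hx hy l hl
        have h : l * (x * y) * l⁻¹ = (l * x * l⁻¹) * (l * y * l⁻¹) := by group
        rw [h]
        exact V.mul_mem (hx l hl) (hy l hl)
      inv_mem' := by
        intro x hx l hl
        have h : l * x⁻¹ * l⁻¹ = (l * x * l⁻¹)⁻¹ := by group
        rw [h]
        exact V.inv_mem (hx l hl) } with hQ
  have hQmem : ∀ x : H, x ∈ Q ↔ ∀ l ∈ Λ, l * x * l⁻¹ ∈ V := fun x => Iff.rfl
  have hQsubV : (Q : Set H) ⊆ (V : Set H) := fun x hx => by simpa using hx 1 h1Λ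
  have hQclosed : IsClosed (Q : Set H) := by
    have h : (Q : Set H) = ⋂ l ∈ Λ, (fun x => l * x * l⁻¹) ⁻¹' (V : Set H) := by
      ext x
      simp only [mem_iInter, mem_preimage]
      exact Iff.rfl
    rw [h]
    exact isClosed_biInter fun l hl => (V.isClosed_of_isOpen hVo).preimage ((continuous_const.mul continuous_id).mul continuous_const)
  have hQcomp : IsCompact (Q : Set H) := hVc.of_isClosed_subset hQclosed hQsubV
  have hQopen : IsOpen (Q : Set H) := by
    have hconj : Continuous (fun p : H × H => p.1 * p.2 * p.1⁻¹) :=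
      (continuous_fst.mul continuous_snd).mul continuous_fst.inv
    have hpre : IsOpen ((fun p : H × H => p.1 * p.2 * p.1⁻¹) ⁻¹' (V : Set H)) :=
      hVo.preimage hconj
    have hsub : Λ ×ˢ {(1 : H)} ⊆ (fun p : H × H => p.1 * p.2 * p.1⁻¹) ⁻¹' (V : Set H) := by
      rintro ⟨l, o⟩ ⟨hl, ho⟩
      simp only [mem_singleton_iff] at ho
      simp only [mem_preimage, ho]
      simpa using V.one_mem
    obtain ⟨u, v, huo, hvo', hΛu, h1v, huv⟩ :=
      generalized_tube_lemma hΛcomp isCompact_singleton hpre hsub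
    refine Q.isOpen_of_mem_nhds (Filter.mem_of_superset (hvo'.mem_nhds (h1v rfl)) ?_)
    intro x hx l hl
    exact huv (Set.mk_mem_prod (hΛu hl) hx)
  -- the subgroup P = Q * Λ
  have hnorm : ∀ l ∈ Λ, ∀ q ∈ Q, l * q * l⁻¹ ∈ Q := by
    intro l hl q hq m hm
    have h : m * (l * q * l⁻¹) * m⁻¹ = (m * l) * q * (m * l)⁻¹ := by group
    rw [h]
    exact hq (m * l) (hΛmul m hm l hl)
  set P : Subgroup H :=
    { carrier := (Q : Set H) * Λ
      one_mem' := ⟨1, Q.one_mem, 1, h1Λ, by simp⟩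
      mul_mem' := by
        rintro a b ⟨q₁, hq₁, l₁, hl₁, rfl⟩ ⟨q₂, hq₂, l₂, hl₂, rfl⟩
        refine ⟨q₁ * (l₁ * q₂ * l₁⁻¹), Q.mul_mem hq₁ (hnorm l₁ hl₁ q₂ hq₂),
          l₁ * l₂, hΛmul l₁ hl₁ l₂ hl₂, by group⟩
      inv_mem' := by
        rintro a ⟨q, hq, l, hl, rfl⟩
        refine ⟨l⁻¹ * q⁻¹ * l, ?_, l⁻¹, hΛinv l hl, by group⟩
        have h : l⁻¹ * q⁻¹ * l = l⁻¹ * q⁻¹ * (l⁻¹)⁻¹ := by group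
        rw [h]
        exact hnorm l⁻¹ (hΛinv l hl) q⁻¹ (Q.inv_mem hq) } with hP
  have hPcarrier : (P : Set H) = (Q : Set H) * Λ := rfl
  have hPcomp : IsCompact (P : Set H) := by rw [hPcarrier]; exact hQcomp.mul hΛcomp
  have hQsubP : (Q : Set H) ⊆ (P : Set H) := by
    intro q hq
    exact ⟨q, hq, 1, h1Λ, by simp⟩
  have hΛsubP : Λ ⊆ (P : Set H) := by
    intro l hl
    exact ⟨1, Q.one_mem, l, hl, by simp⟩
  have hPopen : IsOpen (P : Set H) :=
    P.isOpen_of_mem_nhds (Filter.mem_of_superset (hQopen.mem_nhds Q.one_mem) hQsubP)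
  have hPclosed : IsClosed (P : Set H) := P.isClosed_of_isOpen hPopen
  -- attractor into P
  obtain ⟨N₄, hN₄⟩ := hattract (P : Set H) hPopen hΛsubP
  -- the final subgroup Ω
  set Ω : Subgroup H :=
    { carrier := ⋂ k : ℕ, f^[k] ⁻¹' (P : Set H)
      one_mem' := mem_iInter.mpr fun k => by
        simp only [mem_preimage, hfone]
        exact P.one_mem
      mul_mem' := by
        intro x y hx hy
        refine mem_iInter.mpr fun k => ?_
        simp only [mem_preimage, hfmul]
        exact P.mul_mem (mem_iInter.mp hx k) (mem_iInter.mp hy k)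
      inv_mem' := by
        intro x hx
        refine mem_iInter.mpr fun k => ?_
        simp only [mem_preimage, hfinv]
        exact P.inv_mem (mem_iInter.mp hx k) } with hΩ
  have hΩcarrier : (Ω : Set H) = ⋂ k : ℕ, f^[k] ⁻¹' (P : Set H) := rfl
  have hΩclosed : IsClosed (Ω : Set H) := by
    rw [hΩcarrier]
    exact isClosed_iInter fun k => hPclosed.preimage (hfc k)
  have hΩsubP : (Ω : Set H) ⊆ (P : Set H) := by
    intro x hx
    have h := mem_iInter.mp hx 0
    simpa using h
  have hΩcomp : IsCompact (Ω : Set H) := hPcomp.of_isClosed_subset hΩclosed hΩsubP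
  have hΩstable : ∀ x ∈ Ω, φ x ∈ Ω := by
    intro x hx
    refine mem_iInter.mpr fun k => ?_
    have h := mem_iInter.mp hx (k + 1)
    simpa only [mem_preimage, Function.iterate_succ_apply] using h
  obtain ⟨N₅, hN₅⟩ := hvac (V : Set H) hVc
  have hΩopen : IsOpen (Ω : Set H) := by
    set W' : Set H := (V : Set H) ∩ ⋂ k ∈ Finset.range (N₅ + N₄), f^[k] ⁻¹' (P : Set H)
      with hW'
    have hW'open : IsOpen W' := hVo.inter (isOpen_biInter_finset fun k _ =>
      hPopen.preimage (hfc k))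
    have h1W' : (1 : H) ∈ W' := by
      refine ⟨V.one_mem, mem_iInter₂.mpr fun k _ => ?_⟩
      simp only [mem_preimage, hfone]
      exact P.one_mem
    have hW'sub : W' ⊆ (Ω : Set H) := by
      rintro x ⟨hxV, hxfin⟩
      refine mem_iInter.mpr fun k => ?_
      rcases lt_or_ge k (N₅ + N₄) with h | h
      · exact mem_iInter₂.mp hxfin k (Finset.mem_range.mpr h)
      · have heq : f^[k] x = f^[N₄] (f^[k - N₄] x) := by
          rw [← Function.iterate_add_apply, show N₄ + (k - N₄) = k by omega]
        simp only [mem_preimage]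
        rw [heq]
        exact hN₄ N₄ le_rfl ⟨f^[k - N₄] x, hN₅ _ (by omega) ⟨x, hxV, rfl⟩, rfl⟩
    exact Ω.isOpen_of_mem_nhds (Filter.mem_of_superset (hW'open.mem_nhds h1W') hW'sub)
  refine ⟨Ω, hΩcomp, hΩopen, hΩstable, N₄, fun m hm => ?_⟩
  rintro z ⟨x, hx, rfl⟩
  refine mem_iInter.mpr fun k => ?_
  simp only [mem_preimage]
  rw [← Function.iterate_add_apply]
  exact hN₄ (k + m) (by omega) ⟨x, hx, rfl⟩

end ContractionAux2


open Set Function Pointwise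

namespace ContractionAux3

variable {G : Type*} [Group G] [TopologicalSpace G] [IsTopologicalGroup G]

lemma relindex_pos {A B : Subgroup G} (hAo : IsOpen (A : Set G)) (hBc : IsCompact (B : Set G)) :
    0 < A.relIndex B := by
  haveI : CompactSpace B := isCompact_iff_compactSpace.mp hBc
  have hopen : IsOpen ((A.subgroupOf B : Subgroup B) : Set B) := by
    have h : ((A.subgroupOf B : Subgroup B) : Set B) = (Subtype.val : B → G) ⁻¹' (A : Set G) :=
      Subgroup.coe_comap _ _
    rw [h]
    exact hAo.preimage continuous_subtype_val
  haveI := Subgroup.quotient_finite_of_isOpen (A.subgroupOf B) hopen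
  exact Nat.pos_of_ne_zero Subgroup.index_ne_zero_of_finite

/-- relative size of `B` w.r.t. `A` -/
noncomputable def dd (A B : Subgroup G) : ℚ := (A.relIndex B : ℚ) / (B.relIndex A : ℚ)

lemma dd_pos {A B : Subgroup G} (hAc : IsCompact (A : Set G)) (hAo : IsOpen (A : Set G))
    (hBc : IsCompact (B : Set G)) (hBo : IsOpen (B : Set G)) : 0 < dd A B := by
  apply div_pos
  · exact_mod_cast relindex_pos hAo hBc
  · exact_mod_cast relindex_pos hBo hAc

lemma dd_self (A : Subgroup G) : dd A A = 1 := by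
  simp [dd, Subgroup.relIndex_self]

lemma dd_cocycle {A B C : Subgroup G}
    (hAc : IsCompact (A : Set G)) (hAo : IsOpen (A : Set G))
    (hBc : IsCompact (B : Set G)) (hBo : IsOpen (B : Set G))
    (hCc : IsCompact (C : Set G)) (hCo : IsOpen (C : Set G)) :
    dd A C = dd A B * dd B C := by
  set D : Subgroup G := A ⊓ B ⊓ C with hD
  have hDo : IsOpen (D : Set G) := by
    have h : (D : Set G) = ((A : Set G) ∩ B) ∩ C := by
      rw [hD]; rfl
    rw [h]
    exact (hAo.inter hBo).inter hCo
  have hDA : D ≤ A := le_trans inf_le_left inf_le_left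
  have hDB : D ≤ B := le_trans inf_le_left inf_le_right
  have hDC : D ≤ C := inf_le_right
  have hratio : ∀ X Y : Subgroup G, IsCompact (X : Set G) → IsOpen (X : Set G) →
      IsCompact (Y : Set G) → IsOpen (Y : Set G) → D ≤ X → D ≤ Y →
      dd X Y = (D.relIndex Y : ℚ) / (D.relIndex X : ℚ) := by
    intro X Y hXc hXo hYc hYo hDX hDY
    have hXY : IsCompact ((X ⊓ Y : Subgroup G) : Set G) := by
      have h : ((X ⊓ Y : Subgroup G) : Set G) = (X : Set G) ∩ Y := rfl
      rw [h]
      exact hXc.inter_right (Y.isClosed_of_isOpen hYo)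
    have hα : (0 : ℚ) < (D.relIndex (X ⊓ Y) : ℚ) := by
      exact_mod_cast relindex_pos hDo hXY
    have h1 : D.relIndex Y = D.relIndex (X ⊓ Y) * (X ⊓ Y).relIndex Y := by
      rw [Subgroup.relIndex_mul_relIndex D (X ⊓ Y) Y (le_inf hDX hDY) inf_le_right]
    have h2 : D.relIndex X = D.relIndex (X ⊓ Y) * (X ⊓ Y).relIndex X := by
      rw [Subgroup.relIndex_mul_relIndex D (X ⊓ Y) X (le_inf hDX hDY) inf_le_left]
    rw [dd, h1, h2, Subgroup.inf_relIndex_right, Subgroup.inf_relIndex_left]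
    push_cast
    rw [mul_div_mul_left _ _ (ne_of_gt hα)]
  have hfA : (0:ℚ) < (D.relIndex A : ℚ) := by exact_mod_cast relindex_pos hDo hAc
  have hfB : (0:ℚ) < (D.relIndex B : ℚ) := by exact_mod_cast relindex_pos hDo hBc
  rw [hratio A C hAc hAo hCc hCo hDA hDC, hratio A B hAc hAo hBc hBo hDA hDB,
    hratio B C hBc hBo hCc hCo hDB hDC]
  field_simp

lemma relindex_map_equiv (e : G ≃* G) (A B : Subgroup G) :
    (A.map e.toMonoidHom).relIndex (B.map e.toMonoidHom) = A.relIndex B := by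
  simp only [MulEquiv.toMonoidHom_eq_coe]
  rw [Subgroup.map_equiv_eq_comap_symm e A, Subgroup.relIndex_comap]
  congr 1
  rw [Subgroup.map_map]
  have h : ((e.symm : G →* G).comp (e : G →* G)) = MonoidHom.id G := by
    ext x
    simp
  rw [h, Subgroup.map_id]

lemma dd_map (e : G ≃* G) (A B : Subgroup G) :
    dd (A.map e.toMonoidHom) (B.map e.toMonoidHom) = dd A B := by
  rw [dd, dd, relindex_map_equiv, relindex_map_equiv]

end ContractionAux3


section MainProof

open Set Function Pointwise

/-- Let `H` be a non-compact locally compact group with compact identity component, and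
let a locally compact group `S` act continuously on `H` by automorphisms `π`, with an
element `ξ ∈ S` generating an infinite discrete cocompact cyclic subgroup such that
`π ξ` contracts `H`. Then (i) there is a unique continuous surjective homomorphism
`p : S → ℤ` with `p ξ > 0`, with compact kernel `W`; and (ii) there is a compact open
subgroup `Ω ⊆ H` invariant under `π(W)`, stable under `π(p⁻¹(ℕ))`, which swallows every
compact subset of `H` under `π(s)` for `p s` large. -/
theorem contraction_cocompact_structure
    {H : Type*} [Group H] [TopologicalSpace H] [IsTopologicalGroup H] [LocallyCompactSpace H]
    (hHnc : ¬ IsCompact (Set.univ : Set H))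
    (hH0 : IsCompact (connectedComponent (1 : H)))
    {S : Type*} [Group S] [TopologicalSpace S] [IsTopologicalGroup S] [LocallyCompactSpace S]
    (π : S →* MulAut H)
    (hcont : Continuous fun q : S × H => π q.1 q.2)
    (ξ : S)
    (hinf : (Subgroup.zpowers ξ : Set S).Infinite)
    (hdisc : DiscreteTopology (Subgroup.zpowers ξ))
    (hcocompact : CompactSpace (S ⧸ Subgroup.zpowers ξ))
    (hcontr : ∃ U : Set H, IsCompact U ∧ ∀ M : Set H, IsCompact M →
      ∃ N : ℕ, ∀ k ≥ N, (⇑(π ξ))^[k] '' M ⊆ U) :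
    ∃ p : S → ℤ,
      (∀ s t : S, p (s * t) = p s + p t) ∧ Continuous p ∧
      Function.Surjective p ∧ 0 < p ξ ∧
      (∀ q : S → ℤ, (∀ s t : S, q (s * t) = q s + q t) → Continuous q →
        Function.Surjective q → 0 < q ξ → q = p) ∧
      IsCompact {s : S | p s = 0} ∧
      ∃ Ω : Subgroup H, IsCompact (Ω : Set H) ∧ IsOpen (Ω : Set H) ∧
        (∀ w : S, p w = 0 → ⇑(π w) '' (Ω : Set H) = (Ω : Set H)) ∧
        (∀ s : S, 0 ≤ p s → ⇑(π s) '' (Ω : Set H) ⊆ (Ω : Set H)) ∧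
        ∀ K : Set H, IsCompact K → ∃ k : ℕ, ∀ s : S, (k : ℤ) ≤ p s →
          ⇑(π s) '' K ⊆ (Ω : Set H) := by
  classical
  obtain ⟨U, hU, hvac⟩ := hcontr
  -- continuity of individual automorphisms
  have hπc : ∀ s : S, Continuous fun x : H => π s x := fun s =>
    hcont.comp (Continuous.prodMk_right s)
  have hππ : ∀ (s t : S) (x : H), π s (π t x) = π (s * t) x := fun s t x => by
    rw [map_mul, MulAut.mul_apply]
  have hπ1 : ∀ x : H, π 1 x = x := fun x => by rw [map_one, MulAut.one_apply]
  have hπinv : ∀ (s : S) (x : H), π s⁻¹ (π s x) = x := fun s x => by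
    rw [hππ, inv_mul_cancel, hπ1]
  have hπinv' : ∀ (s : S) (x : H), π s (π s⁻¹ x) = x := fun s x => by
    rw [hππ, mul_inv_cancel, hπ1]
  -- the basic compact open subgroup and the stable one
  obtain ⟨V, hVc, hVo⟩ := ContractionAux.exists_compactOpen_subgroup hH0
  obtain ⟨Ω₀, hΩc, hΩo, hΩstable, M₀, hM₀⟩ :=
    ContractionAux2.exists_stable_subgroup (π ξ) (hπc ξ) hU hvac V hVc hVo
  have hΩclosed : IsClosed (Ω₀ : Set H) := Ω₀.isClosed_of_isOpen hΩo
  set f : H → H := ⇑(π ξ) with hf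
  have hswallow : ∀ K : Set H, IsCompact K → ∃ N : ℕ, ∀ n ≥ N,
      f^[n] '' K ⊆ (Ω₀ : Set H) := by
    intro K hK
    obtain ⟨N, hN⟩ := hvac K hK
    refine ⟨N + M₀, fun n hn => ?_⟩
    have h : f^[n] '' K = f^[M₀] '' (f^[n - M₀] '' K) := by
      rw [← Set.image_comp, ← Function.iterate_add, show M₀ + (n - M₀) = n by omega]
    rw [h]
    exact (Set.image_mono (hN (n - M₀) (by omega))).trans (hM₀ M₀ le_rfl)
  have hiter : ∀ (n : ℕ) (x : H), f^[n] x = π (ξ ^ n) x := by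
    intro n
    induction n with
    | zero => intro x; simp [hπ1]
    | succ n ih =>
        intro x
        rw [Function.iterate_succ_apply, ih (f x), hf]
        show π (ξ ^ n) (π ξ x) = _
        rw [hππ, ← pow_succ]
  -- cocompactness: S = C * ⟨ξ⟩
  have hdec : ∃ C : Set S, IsCompact C ∧ ∀ s : S, ∃ c ∈ C, ∃ n : ℤ, s = c * ξ ^ n := by
    obtain ⟨t, ht⟩ := (isCompact_univ (X := S ⧸ Subgroup.zpowers ξ)).elim_finite_subcover
      (fun x : S => (QuotientGroup.mk '' interior (Classical.choose (exists_compact_mem_nhds x))))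
      (fun x => QuotientGroup.isOpenMap_coe _ isOpen_interior)
      (by
        intro y _
        obtain ⟨s, rfl⟩ := QuotientGroup.mk_surjective y
        refine mem_iUnion.mpr ⟨s, ⟨s, ?_, rfl⟩⟩
        exact mem_interior_iff_mem_nhds.mpr
          (Classical.choose_spec (exists_compact_mem_nhds s)).2)
    refine ⟨⋃ x ∈ t, Classical.choose (exists_compact_mem_nhds x),
      t.finite_toSet.isCompact_biUnion
        (fun x _ => (Classical.choose_spec (exists_compact_mem_nhds x)).1), ?_⟩
    intro s
    have := ht (mem_univ (QuotientGroup.mk s : S ⧸ Subgroup.zpowers ξ))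
    obtain ⟨x, hxt, c, hc, hcs⟩ := by simpa only [mem_iUnion, Set.mem_image] using this
    have hmem : c⁻¹ * s ∈ Subgroup.zpowers ξ := QuotientGroup.eq.mp hcs
    obtain ⟨n, hn⟩ := Subgroup.mem_zpowers_iff.mp hmem
    refine ⟨c, mem_biUnion hxt (interior_subset hc), n, ?_⟩
    rw [hn]
    group
  obtain ⟨C, hCc, hCdec⟩ := hdec
  -- subgroup images
  set A : S → Subgroup H := fun s => Ω₀.map (π s).toMonoidHom with hA
  have hAset : ∀ s, (A s : Set H) = ⇑(π s) '' (Ω₀ : Set H) := fun s => Subgroup.coe_map _ _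
  have hAcomp : ∀ s, IsCompact (A s : Set H) := fun s => by
    rw [hAset]; exact hΩc.image (hπc s)
  have hApre : ∀ s, (A s : Set H) = ⇑(π s⁻¹) ⁻¹' (Ω₀ : Set H) := by
    intro s
    rw [hAset]
    ext x
    constructor
    · rintro ⟨y, hy, rfl⟩
      have hmem : π s⁻¹ (π s y) ∈ (Ω₀ : Set H) := by rw [hπinv]; exact hy
      exact Set.mem_preimage.mpr hmem
    · intro hx
      exact ⟨π s⁻¹ x, hx, hπinv' s x⟩
  have hAopen : ∀ s, IsOpen (A s : Set H) := fun s => by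
    rw [hApre]; exact hΩo.preimage (hπc s⁻¹)
  have hAone : A 1 = Ω₀ := by
    have h : (A 1 : Set H) = (Ω₀ : Set H) := by
      rw [hAset]
      ext x
      constructor
      · rintro ⟨y, hy, rfl⟩; rw [hπ1]; exact hy
      · intro hx; exact ⟨x, hx, hπ1 x⟩
    exact SetLike.coe_set_eq.mp h
  have hAmul : ∀ s t, A (s * t) = (A t).map (π s).toMonoidHom := by
    intro s t
    show Ω₀.map (π (s * t)).toMonoidHom = (Ω₀.map (π t).toMonoidHom).map (π s).toMonoidHom
    rw [Subgroup.map_map]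
    congr 1
    ext x
    exact (hππ s t x).symm
  -- the multiplicative weight m
  set m : S → ℚ := fun s => ContractionAux3.dd Ω₀ (A s) with hm
  have hm1 : m 1 = 1 := by rw [hm]; simp only [hAone]; exact ContractionAux3.dd_self Ω₀
  have hmpos : ∀ s, 0 < m s := fun s => ContractionAux3.dd_pos hΩc hΩo (hAcomp s) (hAopen s)
  have hmmul : ∀ s t, m (s * t) = m s * m t := by
    intro s t
    rw [hm]
    show ContractionAux3.dd Ω₀ (A (s*t)) = _
    rw [ContractionAux3.dd_cocycle hΩc hΩo (hAcomp s) (hAopen s) (hAcomp (s*t)) (hAopen (s*t))]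
    congr 1
    rw [hAmul s t]
    show ContractionAux3.dd (A s) ((A t).map (π s).toMonoidHom) = _
    rw [hA]
    show ContractionAux3.dd (Ω₀.map (π s).toMonoidHom) ((Ω₀.map (π t).toMonoidHom).map
      (π s).toMonoidHom) = _
    rw [ContractionAux3.dd_map (π s : H ≃* H) Ω₀ (Ω₀.map (π t).toMonoidHom)]
  -- stabilizer neighborhood of 1 in S
  have hstab : ∃ N₀ : Set S, IsOpen N₀ ∧ (1 : S) ∈ N₀ ∧ ∀ u ∈ N₀, A u = Ω₀ := by
    have hsub : {(1 : S)} ×ˢ (Ω₀ : Set H) ⊆ (fun q : S × H => π q.1 q.2) ⁻¹' (Ω₀ : Set H) := by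
      rintro ⟨s, x⟩ ⟨hs, hx⟩
      simp only [mem_singleton_iff] at hs
      subst hs
      simpa only [Set.mem_preimage, hπ1] using hx
    obtain ⟨u, v, huo, hvo, h1u, hΩv, huv⟩ := generalized_tube_lemma isCompact_singleton hΩc
      (hΩo.preimage hcont) hsub
    refine ⟨u ∩ u⁻¹, huo.inter huo.inv, ⟨h1u rfl, by simpa using h1u rfl⟩, ?_⟩
    rintro w ⟨hw, hw'⟩
    have key : ∀ z ∈ u, ⇑(π z) '' (Ω₀ : Set H) ⊆ (Ω₀ : Set H) := by
      rintro z hz y ⟨x, hx, rfl⟩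
      exact huv (Set.mk_mem_prod hz (hΩv hx))
    have h1 : ⇑(π w) '' (Ω₀ : Set H) ⊆ (Ω₀ : Set H) := key w hw
    have h2 : ⇑(π w⁻¹) '' (Ω₀ : Set H) ⊆ (Ω₀ : Set H) := key w⁻¹ (Set.mem_inv.mp hw')
    have h3 : (Ω₀ : Set H) ⊆ ⇑(π w) '' (Ω₀ : Set H) := by
      intro x hx
      exact ⟨π w⁻¹ x, h2 ⟨x, hx, rfl⟩, hπinv' w x⟩
    apply SetLike.coe_set_eq.mp
    rw [hAset]
    exact Subset.antisymm h1 h3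
  obtain ⟨N₀, hN₀o, hN₀1, hN₀⟩ := hstab
  -- m is locally constant
  have hlevel : ∀ γ : ℚ, IsOpen {s : S | m s = γ} := by
    intro γ
    rw [isOpen_iff_mem_nhds]
    intro s₀ hs₀
    have hopen : IsOpen ((fun u : S => s₀⁻¹ * u) ⁻¹' N₀) :=
      hN₀o.preimage (continuous_const.mul continuous_id)
    have hmem : s₀ ∈ (fun u : S => s₀⁻¹ * u) ⁻¹' N₀ := by
      simpa using hN₀1
    refine Filter.mem_of_superset (hopen.mem_nhds hmem) ?_
    intro s hs
    have hdecomp : s = s₀ * (s₀⁻¹ * s) := by group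
    have hval : m s = m s₀ := by
      rw [hdecomp, hmmul]
      have hAu : A (s₀⁻¹ * s) = Ω₀ := hN₀ _ hs
      have : m (s₀⁻¹ * s) = 1 := by
        rw [hm]
        show ContractionAux3.dd Ω₀ (A (s₀⁻¹ * s)) = 1
        rw [hAu]
        exact ContractionAux3.dd_self Ω₀
      rw [this, mul_one]
    rw [mem_setOf_eq, hval]
    exact hs₀
  have hpreopen : ∀ T : Set ℚ, IsOpen (m ⁻¹' T) := by
    intro T
    have h : m ⁻¹' T = ⋃ γ ∈ T, {s : S | m s = γ} := by
      ext s
      simp only [mem_preimage, mem_iUnion, mem_setOf_eq]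
      exact ⟨fun h => ⟨m s, h, rfl⟩, fun ⟨γ, hγ, he⟩ => he ▸ hγ⟩
    rw [h]
    exact isOpen_biUnion fun γ _ => hlevel γ
  have hpreclosed : ∀ T : Set ℚ, IsClosed (m ⁻¹' T) := by
    intro T
    rw [← isOpen_compl_iff, ← preimage_compl]
    exact hpreopen Tᶜ
  have hfinval : ∀ {C' : Set S}, IsCompact C' → (m '' C').Finite := by
    intro C' hC'
    obtain ⟨t, htm, htcov⟩ := hC'.elim_nhds_subcover (fun x => {s : S | m s = m x})
      (fun x _ => (hlevel (m x)).mem_nhds rfl)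
    refine Set.Finite.subset (t.finite_toSet.image m) ?_
    rintro γ ⟨s, hs, rfl⟩
    obtain ⟨x, hxt, hsx⟩ := mem_iUnion₂.mp (htcov hs)
    exact ⟨x, hxt, hsx.symm⟩
  -- the value of m at ξ
  have hAξΩ : A ξ ≤ Ω₀ := by
    intro x hx
    obtain ⟨y, hy, rfl⟩ := Subgroup.mem_map.mp hx
    exact hΩstable y hy
  set qn : ℕ := (A ξ).relIndex Ω₀ with hqn
  have hqnpos : 0 < qn := ContractionAux3.relindex_pos (hAopen ξ) hΩc
  have hmξ : m ξ = 1 / (qn : ℚ) := by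
    rw [hm]
    show ContractionAux3.dd Ω₀ (A ξ) = 1 / (qn : ℚ)
    rw [ContractionAux3.dd, Subgroup.relIndex_eq_one.mpr hAξΩ]
    norm_num
    exact hqn.symm
  have hqn2 : 2 ≤ qn := by
    by_contra hcon
    have hqn1 : qn = 1 := by omega
    have hle : Ω₀ ≤ A ξ := Subgroup.relIndex_eq_one.mp hqn1
    have heq : (A ξ : Set H) = (Ω₀ : Set H) := by
      rw [le_antisymm hAξΩ hle]
    rw [hAset] at heq
    -- then Ω₀ is invariant and swallows everything, so H is compact
    have hfinj : Function.Injective f := (π ξ).injective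
    have hiterimg : ∀ n : ℕ, f^[n] '' (Ω₀ : Set H) = (Ω₀ : Set H) := by
      intro n
      induction n with
      | zero => simp
      | succ n ih =>
          rw [Function.iterate_succ', Set.image_comp, ih]
          exact heq
    have huniv : (univ : Set H) ⊆ (Ω₀ : Set H) := by
      intro x _
      obtain ⟨N, hN⟩ := hswallow {x} isCompact_singleton
      have hx : f^[N] x ∈ f^[N] '' (Ω₀ : Set H) := by
        rw [hiterimg]
        exact hN N le_rfl ⟨x, rfl, rfl⟩
      obtain ⟨y, hy, hyx⟩ := hx
      have : y = x := hfinj.iterate N hyx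
      exact this ▸ hy
    exact hHnc (by rw [← Set.univ_subset_iff.mp huniv]; exact hΩc)
  have hqQ : (1 : ℚ) < (qn : ℚ) := by exact_mod_cast hqn2.trans_lt' one_lt_two
  -- elementary multiplicativity consequences
  have hminv : ∀ s : S, m s⁻¹ = (m s)⁻¹ := by
    intro s
    have h := hmmul s⁻¹ s
    rw [inv_mul_cancel, hm1] at h
    exact eq_inv_of_mul_eq_one_left h.symm
  have hmpow : ∀ (s : S) (n : ℕ), m (s ^ n) = m s ^ n := by
    intro s n
    induction n with
    | zero => simpa using hm1
    | succ n ih => rw [pow_succ, hmmul, ih, pow_succ]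
  have hmzpow : ∀ (s : S) (n : ℤ), m (s ^ n) = m s ^ n := by
    intro s n
    cases n with
    | ofNat k => simpa using hmpow s k
    | negSucc k => rw [zpow_negSucc, hminv, hmpow, zpow_negSucc]
  -- bounds for m on the compact set C
  have hCne : C.Nonempty := by
    obtain ⟨cc, hcc, n, hn⟩ := hCdec 1
    exact ⟨cc, hcc⟩
  have hmCfin : (m '' C).Finite := hfinval hCc
  have hFne : hmCfin.toFinset.Nonempty := by
    rw [Set.Finite.toFinset_nonempty]
    exact hCne.image m
  set γ₁ : ℚ := hmCfin.toFinset.min' hFne with hγ₁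
  set γ₂ : ℚ := hmCfin.toFinset.max' hFne with hγ₂
  have hγ₁pos : 0 < γ₁ := by
    have hmem := hmCfin.toFinset.min'_mem hFne
    rw [Set.Finite.mem_toFinset] at hmem
    obtain ⟨cc, _, hcc⟩ := hmem
    rw [hγ₁, ← hcc]
    exact hcc ▸ (hcc.symm ▸ hmpos cc)
  have hbounds : ∀ cc ∈ C, γ₁ ≤ m cc ∧ m cc ≤ γ₂ := by
    intro cc hcc
    have hmem : m cc ∈ hmCfin.toFinset := by
      rw [Set.Finite.mem_toFinset]
      exact ⟨cc, hcc, rfl⟩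
    exact ⟨hmCfin.toFinset.min'_le _ hmem, hmCfin.toFinset.le_max' _ hmem⟩
  have hβpos : (0:ℚ) < (qn:ℚ) := by positivity
  -- properness of m
  have hproper : ∀ a b : ℚ, 0 < a → IsCompact (m ⁻¹' Icc a b) := by
    intro a b ha
    obtain ⟨J₁, hJ₁⟩ := pow_unbounded_of_one_lt (γ₂ / a) hqQ
    obtain ⟨J₂, hJ₂⟩ := pow_unbounded_of_one_lt (b / γ₁) hqQ
    have hsub : m ⁻¹' Icc a b ⊆
        ⋃ j ∈ Finset.Icc (-(J₂:ℤ)) (J₁:ℤ), (fun cc => cc * ξ ^ j) '' C := by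
      intro s hs
      obtain ⟨hs1, hs2⟩ := hs
      have hbpos : (0:ℚ) < b := lt_of_lt_of_le (lt_of_lt_of_le ha hs1) hs2
      obtain ⟨cc, hcc, n, rfl⟩ := hCdec s
      have hzpos : (0:ℚ) < (qn:ℚ) ^ n := zpow_pos hβpos n
      have hms : m (cc * ξ ^ n) = m cc / (qn:ℚ) ^ n := by
        rw [hmmul, hmzpow, hmξ, div_zpow, one_zpow, mul_one_div]
      rw [hms] at hs1 hs2
      obtain ⟨hb1, hb2⟩ := hbounds cc hcc
      have hup : (qn:ℚ) ^ n ≤ γ₂ / a := by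
        rw [le_div_iff₀ ha]
        have h := (le_div_iff₀ hzpos).mp hs1
        calc (qn:ℚ) ^ n * a = a * (qn:ℚ) ^ n := mul_comm _ _
          _ ≤ m cc := h
          _ ≤ γ₂ := hb2
      have hlo : γ₁ / b ≤ (qn:ℚ) ^ n := by
        rw [div_le_iff₀ hbpos]
        have h := (div_le_iff₀ hzpos).mp hs2
        calc γ₁ ≤ m cc := hb1
          _ ≤ b * (qn:ℚ) ^ n := h
          _ = (qn:ℚ) ^ n * b := mul_comm _ _
      have hn1 : n ≤ (J₁:ℤ) := by
        have h : (qn:ℚ) ^ n < (qn:ℚ) ^ (J₁:ℤ) := by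
          rw [zpow_natCast]
          exact lt_of_le_of_lt hup hJ₁
        exact le_of_lt ((zpow_lt_zpow_iff_right₀ hqQ).mp h)
      have hn2 : -(J₂:ℤ) ≤ n := by
        have hpos' : (0:ℚ) < γ₁ / b := div_pos hγ₁pos hbpos
        have h : (qn:ℚ) ^ (-n) < (qn:ℚ) ^ (J₂:ℤ) := by
          rw [zpow_neg, zpow_natCast]
          calc ((qn:ℚ) ^ n)⁻¹ ≤ (γ₁ / b)⁻¹ := by
                exact inv_anti₀ hpos' hlo
            _ = b / γ₁ := by rw [inv_div]
            _ < (qn:ℚ) ^ J₂ := hJ₂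
        have := (zpow_lt_zpow_iff_right₀ hqQ).mp h
        omega
      exact mem_iUnion₂.mpr ⟨n, Finset.mem_Icc.mpr ⟨hn2, hn1⟩, ⟨cc, hcc, rfl⟩⟩
    refine IsCompact.of_isClosed_subset ?_ (hpreclosed _) hsub
    exact (Finset.Icc (-(J₂:ℤ)) (J₁:ℤ)).finite_toSet.isCompact_biUnion
      (fun j _ => hCc.image (continuous_id.mul continuous_const))
  -- the generator of the value group
  have hTqcomp : IsCompact (m ⁻¹' Icc 1 (qn:ℚ)) := hproper 1 (qn:ℚ) one_pos
  have hEfin : (m '' (m ⁻¹' Icc 1 (qn:ℚ))).Finite := hfinval hTqcomp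
  have hqmem : (qn:ℚ) ∈ m '' (m ⁻¹' Icc 1 (qn:ℚ)) := by
    have hv : m ξ⁻¹ = (qn:ℚ) := by
      rw [hminv, hmξ, one_div, inv_inv]
    exact ⟨ξ⁻¹, by rw [mem_preimage, hv]; exact ⟨le_of_lt hqQ, le_rfl⟩, hv⟩
  set E' : Set ℚ := (m '' (m ⁻¹' Icc 1 (qn:ℚ))) ∩ {γ : ℚ | 1 < γ} with hE'
  have hE'fin : E'.Finite := hEfin.inter_of_left _
  have hE'ne : E'.Nonempty := ⟨(qn:ℚ), hqmem, hqQ⟩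
  have hFcne : hE'fin.toFinset.Nonempty := by
    rw [Set.Finite.toFinset_nonempty]
    exact hE'ne
  set c : ℚ := hE'fin.toFinset.min' hFcne with hcdef
  have hcE' : c ∈ E' := by
    have h := hE'fin.toFinset.min'_mem hFcne
    rwa [Set.Finite.mem_toFinset] at h
  have hc1 : 1 < c := hcE'.2
  have hcpos : (0:ℚ) < c := lt_trans one_pos hc1
  have hcq : c ≤ (qn:ℚ) := hE'fin.toFinset.min'_le _ (by
    rw [Set.Finite.mem_toFinset]
    exact ⟨hqmem, hqQ⟩)
  have hcmin : ∀ γ ∈ E', c ≤ γ := fun γ hγ =>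
    hE'fin.toFinset.min'_le _ ((Set.Finite.mem_toFinset _).mpr hγ)
  obtain ⟨s_c, hs_c⟩ : ∃ s : S, m s = c := by
    obtain ⟨⟨s, _, hsc⟩, -⟩ := hcE'
    exact ⟨s, hsc⟩
  have hone : ∀ s : S, 1 ≤ m s → m s < c → m s = 1 := by
    intro s h1 h2
    by_contra hne
    have hlt : 1 < m s := lt_of_le_of_ne h1 (Ne.symm hne)
    have hmem : m s ∈ E' :=
      ⟨⟨s, by rw [mem_preimage]; exact ⟨h1, le_trans h2.le hcq⟩, rfl⟩, hlt⟩
    exact absurd (hcmin _ hmem) (not_le.mpr h2)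
  have hgen : ∀ s : S, ∃ n : ℤ, m s = c ^ n := by
    intro s
    obtain ⟨n, hn1, hn2⟩ := exists_mem_Ico_zpow (hmpos s) hc1
    refine ⟨n, ?_⟩
    have hzcpos : (0:ℚ) < c ^ n := zpow_pos hcpos n
    have hms' : m (s * s_c ^ (-n)) = m s / c ^ n := by
      rw [hmmul, hmzpow, hs_c, zpow_neg, div_eq_mul_inv]
    have h1 : 1 ≤ m (s * s_c ^ (-n)) := by
      rw [hms', one_le_div hzcpos]
      exact hn1
    have h2 : m (s * s_c ^ (-n)) < c := by
      rw [hms', div_lt_iff₀ hzcpos]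
      calc m s < c ^ (n + 1) := hn2
        _ = c ^ n * c := by rw [zpow_add_one₀ (ne_of_gt hcpos)]
        _ = c * c ^ n := mul_comm _ _
    have heq1 := hone _ h1 h2
    rw [hms', div_eq_one_iff_eq (ne_of_gt hzcpos)] at heq1
    exact heq1
  -- definition of p
  have hcinj : ∀ {x y : ℤ}, c ^ x = c ^ y → x = y := fun {x y} h =>
    zpow_right_injective₀ hcpos (ne_of_gt hc1) h
  choose pn hpn using hgen
  set p : S → ℤ := fun s => - pn s with hp
  have hplevel : ∀ (s : S) (k : ℤ), p s = k ↔ m s = c ^ (-k) := by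
    intro s k
    constructor
    · intro h
      rw [hpn s]
      congr 1
      have : - pn s = k := h
      omega
    · intro h
      have h2 := hcinj ((hpn s).symm.trans h)
      show - pn s = k
      omega
  have hpadd : ∀ s t : S, p (s * t) = p s + p t := by
    intro s t
    have h : c ^ pn (s * t) = c ^ (pn s + pn t) := by
      rw [← hpn, hmmul, hpn s, hpn t, zpow_add₀ (ne_of_gt hcpos)]
    have h2 := hcinj h
    show - pn (s * t) = - pn s + - pn t
    omega
  have hp1 : p 1 = 0 := by
    have h := hpadd 1 1
    rw [one_mul] at h
    omega
  have hppos : 0 < p ξ := by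
    have h : m ξ < 1 := by
      rw [hmξ, div_lt_one hβpos]
      exact hqQ
    have h2 : c ^ pn ξ < c ^ (0:ℤ) := by
      rw [← hpn, zpow_zero]
      exact h
    have h3 := (zpow_lt_zpow_iff_right₀ hc1).mp h2
    show 0 < - pn ξ
    omega
  have hpcont : Continuous p := by
    rw [continuous_discrete_rng]
    intro k
    have h : p ⁻¹' {k} = {s : S | m s = c ^ (-k)} := by
      ext s
      simp only [mem_preimage, mem_singleton_iff, mem_setOf_eq]
      exact hplevel s k
    rw [h]
    exact hlevel _
  have hpsurj : Function.Surjective p := by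
    intro k
    refine ⟨s_c ^ (-k), (hplevel _ k).mpr ?_⟩
    rw [hmzpow, hs_c]
  have hker : IsCompact {s : S | p s = 0} := by
    have h : {s : S | p s = 0} = m ⁻¹' Icc 1 1 := by
      ext s
      simp only [mem_setOf_eq, mem_preimage, mem_Icc]
      rw [hplevel s 0]
      constructor
      · intro h
        rw [h, neg_zero, zpow_zero]
        exact ⟨le_rfl, le_rfl⟩
      · rintro ⟨h1, h2⟩
        rw [neg_zero, zpow_zero]
        exact le_antisymm h2 h1
    rw [h]
    exact hproper 1 1 one_pos
  -- uniqueness of p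
  have hpzpow : ∀ (s : S) (n : ℤ), p (s ^ n) = n * p s := by
    intro s n
    apply (hplevel _ _).mpr
    rw [hmzpow, hpn s, ← zpow_mul]
    congr 1
    show pn s * n = -(n * p s)
    show pn s * n = -(n * - pn s)
    ring
  have hpinv : ∀ s : S, p s⁻¹ = - p s := by
    intro s
    have h := hpadd s⁻¹ s
    rw [inv_mul_cancel, hp1] at h
    omega
  have hpuniq : ∀ q : S → ℤ, (∀ s t : S, q (s * t) = q s + q t) → Continuous q →
      Function.Surjective q → 0 < q ξ → q = p := by
    intro q hqadd hqcont hqsurj hqpos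
    set u : S → ℤ := fun s => q ξ * p s - p ξ * q s with hu
    have huadd : ∀ s t : S, u (s * t) = u s + u t := by
      intro s t
      simp only [hu, hpadd, hqadd]
      ring
    have hupow : ∀ (s : S) (n : ℕ), u (s ^ n) = n * u s := by
      intro s n
      induction n with
      | zero =>
          have h := huadd 1 1
          rw [one_mul] at h
          simp only [pow_zero]
          omega
      | succ n ih =>
          rw [pow_succ, huadd, ih]
          push_cast
          ring
    have hucont : Continuous u :=
      (continuous_const.mul hpcont).sub (continuous_const.mul hqcont)
    -- u is bounded since u s = u (the C-component)
    have hu1 : u 1 = 0 := by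
      have h := huadd 1 1
      rw [one_mul] at h
      omega
    have huinv : ∀ s : S, u s⁻¹ = - u s := by
      intro s
      have h := huadd s⁻¹ s
      rw [inv_mul_cancel, hu1] at h
      omega
    have huξ : u ξ = 0 := by
      simp only [hu]
      ring
    have huzpow : ∀ n : ℤ, u (ξ ^ n) = 0 := by
      intro n
      cases n with
      | ofNat k =>
          have := hupow ξ k
          rw [huξ] at this
          simpa using this
      | negSucc k =>
          rw [zpow_negSucc, huinv]
          have := hupow ξ (k + 1)
          rw [huξ] at this
          simp [this]
    have hufin : (u '' C).Finite := (hCc.image hucont).finite ⟨by infer_instance⟩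
    have huFne : hufin.toFinset.Nonempty := by
      rw [Set.Finite.toFinset_nonempty]
      exact hCne.image u
    set B : ℤ := max (hufin.toFinset.max' huFne) (-(hufin.toFinset.min' huFne)) with hB
    have huB : ∀ s : S, u s ≤ B ∧ - B ≤ u s := by
      intro s
      obtain ⟨cc, hcc, n, rfl⟩ := hCdec s
      have hmem : u cc ∈ hufin.toFinset := by
        rw [Set.Finite.mem_toFinset]
        exact ⟨cc, hcc, rfl⟩
      have h1 : u (cc * ξ ^ n) = u cc := by
        rw [huadd, huzpow, add_zero]
      rw [h1]
      constructor
      · exact le_max_of_le_left (hufin.toFinset.le_max' _ hmem)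
      · have hm1 := hufin.toFinset.min'_le _ hmem
        have hm2 : -(hufin.toFinset.min' huFne) ≤ B := le_max_right _ _
        omega
    have huzero : ∀ s : S, u s = 0 := by
      intro s
      by_contra hne
      have habs : 1 ≤ |u s| := by rcases abs_cases (u s) with ⟨h,_⟩|⟨h,_⟩ <;> omega
      set n : ℕ := (2 * B + 2).toNat with hn
      have h1 := hupow s n
      have h2 := (huB (s ^ n)).1
      have h3 := (huB (s ^ n)).2
      have h4 : (0:ℤ) ≤ B := by
        have := (huB 1).1
        have := (huB 1).2
        omega
      rw [h1] at h2 h3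
      have habs2 : (n : ℤ) * |u s| ≤ B := by
        rcases abs_cases (u s) with ⟨h, _⟩ | ⟨h, _⟩
        · rw [h] at habs ⊢
          nlinarith [h2]
        · rw [h]
          nlinarith [h3]
      have hn2 : (n : ℤ) = 2 * B + 2 := by omega
      nlinarith [habs2, habs]
    have hkey : ∀ s : S, q ξ * p s = p ξ * q s := by
      intro s
      have := huzero s
      simp only [hu] at this
      omega
    obtain ⟨sp, hsp⟩ := hpsurj 1
    obtain ⟨sq, hsq⟩ := hqsurj 1
    have hdvd1 : p ξ ∣ q ξ := ⟨q sp, by have := hkey sp; rw [hsp] at this; omega⟩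
    have hdvd2 : q ξ ∣ p ξ := ⟨p sq, by have := hkey sq; rw [hsq] at this; omega⟩
    have heq : p ξ = q ξ := Int.dvd_antisymm (le_of_lt hppos) (le_of_lt hqpos) hdvd1 hdvd2
    funext s
    have h := hkey s
    rw [← heq] at h
    exact (mul_left_cancel₀ (ne_of_gt hppos) h.symm)
  -- uniform swallowing: for every compact K, π s K ⊆ Ω₀ once p s is large
  have hdec' : ∀ s : S, ∃ cc ∈ C, ∃ j : ℤ, s = ξ ^ j * cc⁻¹ := by
    intro s
    obtain ⟨cc, hcc, n, hn⟩ := hCdec s⁻¹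
    refine ⟨cc, hcc, -n, ?_⟩
    have h : s = (cc * ξ ^ n)⁻¹ := by rw [← hn, inv_inv]
    rw [h, mul_inv_rev, ← zpow_neg]
  have hpC : ∃ B : ℤ, ∀ cc ∈ C, p cc⁻¹ ≤ B := by
    have hfin : (p '' C⁻¹).Finite := (hCc.inv.image hpcont).finite ⟨by infer_instance⟩
    have hFne' : hfin.toFinset.Nonempty := by
      rw [Set.Finite.toFinset_nonempty]
      exact (hCne.inv).image p
    refine ⟨hfin.toFinset.max' hFne', fun cc hcc => ?_⟩
    apply hfin.toFinset.le_max'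
    rw [Set.Finite.mem_toFinset]
    exact ⟨cc⁻¹, Set.inv_mem_inv.mpr hcc, rfl⟩
  have hswallowS : ∀ K : Set H, IsCompact K → ∃ k : ℕ, ∀ s : S, (k : ℤ) ≤ p s →
      ⇑(π s) '' K ⊆ (Ω₀ : Set H) := by
    intro K hK
    set D : Set H := (fun pr : S × H => π pr.1 pr.2) '' ((C⁻¹ : Set S) ×ˢ K) with hD
    have hDc : IsCompact D := (hCc.inv.prod hK).image hcont
    obtain ⟨ND, hND⟩ := hswallow D hDc
    obtain ⟨B, hB⟩ := hpC
    refine ⟨((ND : ℤ) * p ξ + B + p ξ).toNat, fun s hps => ?_⟩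
    have hps' : (ND : ℤ) * p ξ + B + p ξ ≤ p s :=
      le_trans (Int.self_le_toNat _) hps
    obtain ⟨cc, hcc, j, rfl⟩ := hdec' s
    have hpdecomp : p (ξ ^ j * cc⁻¹) = j * p ξ + p cc⁻¹ := by
      rw [hpadd, hpzpow]
    have hjB : (ND : ℤ) + 1 ≤ j := by
      have h1 : p cc⁻¹ ≤ B := hB cc hcc
      have h2 : ((ND : ℤ) + 1) * p ξ ≤ j * p ξ := by nlinarith [hps', hpdecomp]
      exact le_of_mul_le_mul_right h2 hppos
    have hj0 : 0 ≤ j := by omega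
    rintro y ⟨x, hx, rfl⟩
    have hxD : π cc⁻¹ x ∈ D := ⟨(cc⁻¹, x), ⟨Set.inv_mem_inv.mpr hcc, hx⟩, rfl⟩
    have hstep : π (ξ ^ j * cc⁻¹) x = f^[j.toNat] (π cc⁻¹ x) := by
      rw [← hππ]
      have hξeq : ξ ^ j = ξ ^ (j.toNat : ℕ) := by
        rw [← zpow_natCast ξ j.toNat, Int.toNat_of_nonneg hj0]
      rw [hξeq, ← hiter]
    rw [hstep]
    exact hND j.toNat (by omega) ⟨_, hxD, rfl⟩
  -- the final subgroup Ω
  obtain ⟨k₀, hk₀⟩ := hswallowS (Ω₀ : Set H) hΩc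
  set Ω : Subgroup H :=
    { carrier := {x : H | ∀ s : S, 0 ≤ p s → π s x ∈ Ω₀}
      one_mem' := fun s _ => by rw [map_one]; exact Ω₀.one_mem
      mul_mem' := by
        intro x y hx hy s hs
        rw [map_mul]
        exact Ω₀.mul_mem (hx s hs) (hy s hs)
      inv_mem' := by
        intro x hx s hs
        rw [map_inv]
        exact Ω₀.inv_mem (hx s hs) } with hΩdef
  have hΩmem : ∀ x : H, x ∈ (Ω : Set H) ↔ ∀ s : S, 0 ≤ p s → π s x ∈ Ω₀ :=
    fun x => Iff.rfl
  have hΩsub : (Ω : Set H) ⊆ (Ω₀ : Set H) := by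
    intro x hx
    have h := (hΩmem x).mp hx 1 (le_of_eq hp1.symm)
    rwa [hπ1] at h
  have hΩclosed2 : IsClosed (Ω : Set H) := by
    have h : (Ω : Set H) = ⋂ (s : {s : S // 0 ≤ p s}), (fun x => π s.1 x) ⁻¹' (Ω₀ : Set H) := by
      ext x
      rw [hΩmem]
      simp only [mem_iInter, mem_preimage]
      exact ⟨fun h s => h s.1 s.2, fun h s hs => h ⟨s, hs⟩⟩
    rw [h]
    exact isClosed_iInter fun s => hΩclosed.preimage (hπc s.1)
  have hΩcomp2 : IsCompact (Ω : Set H) := hΩc.of_isClosed_subset hΩclosed2 hΩsub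
  have hstable0 : ∀ t : S, 0 ≤ p t → ⇑(π t) '' (Ω : Set H) ⊆ (Ω : Set H) := by
    rintro t ht y ⟨x, hx, rfl⟩
    rw [hΩmem]
    intro s hs
    rw [hππ]
    exact (hΩmem x).mp hx (s * t) (by rw [hpadd]; omega)
  have hinv0 : ∀ w : S, p w = 0 → ⇑(π w) '' (Ω : Set H) = (Ω : Set H) := by
    intro w hw
    apply Subset.antisymm (hstable0 w (le_of_eq hw.symm))
    intro x hx
    refine ⟨π w⁻¹ x, ?_, hπinv' w x⟩
    rw [hΩmem]
    intro s hs
    rw [hππ]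
    refine (hΩmem x).mp hx (s * w⁻¹) ?_
    rw [hpadd, hpinv]
    omega
  have hP₀ : IsCompact {s : S | 0 ≤ p s ∧ p s < (k₀ : ℤ)} := by
    have h : {s : S | 0 ≤ p s ∧ p s < (k₀ : ℤ)} =
        ⋃ i ∈ Finset.range k₀, {s : S | p s = (i : ℤ)} := by
      ext s
      simp only [mem_setOf_eq, mem_iUnion, Finset.mem_range]
      constructor
      · rintro ⟨h1, h2⟩
        exact ⟨(p s).toNat, by omega, by omega⟩
      · rintro ⟨i, hi, hpi⟩
        omega
    rw [h]
    refine (Finset.range k₀).finite_toSet.isCompact_biUnion (fun i _ => ?_)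
    have h2 : {s : S | p s = (i : ℤ)} = m ⁻¹' Icc (c ^ (-(i:ℤ))) (c ^ (-(i:ℤ))) := by
      ext s
      simp only [mem_setOf_eq, mem_preimage, mem_Icc]
      rw [hplevel s (i : ℤ)]
      constructor
      · intro h
        exact ⟨le_of_eq h.symm, le_of_eq h⟩
      · rintro ⟨h1, h2⟩
        exact le_antisymm h2 h1
    rw [h2]
    exact hproper _ _ (zpow_pos hcpos _)
  have hsub0 : {s : S | 0 ≤ p s ∧ p s < (k₀ : ℤ)} ×ˢ {(1 : H)} ⊆
      (fun pr : S × H => π pr.1 pr.2) ⁻¹' (Ω₀ : Set H) := by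
    rintro ⟨s, x⟩ ⟨hs, hx⟩
    simp only [mem_singleton_iff] at hx
    subst hx
    simp only [mem_preimage, map_one]
    exact Ω₀.one_mem
  obtain ⟨u0, v0, hu0o, hv0o, hPu0, h1v0, huv0⟩ :=
    generalized_tube_lemma hP₀ isCompact_singleton (hΩo.preimage hcont) hsub0
  have hΩopen2 : IsOpen (Ω : Set H) := by
    apply Ω.isOpen_of_mem_nhds
    refine Filter.mem_of_superset ((hv0o.inter hΩo).mem_nhds ⟨h1v0 rfl, Ω₀.one_mem⟩) ?_
    rintro x ⟨hxv, hxΩ₀⟩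
    rw [SetLike.mem_coe, ← SetLike.mem_coe, hΩmem]
    intro s hs
    rcases lt_or_ge (p s) (k₀ : ℤ) with h | h
    · exact huv0 (Set.mk_mem_prod (hPu0 ⟨hs, h⟩) hxv)
    · exact hk₀ s h ⟨x, hxΩ₀, rfl⟩
  have hfinal : ∀ K : Set H, IsCompact K → ∃ k : ℕ, ∀ s : S, (k : ℤ) ≤ p s →
      ⇑(π s) '' K ⊆ (Ω : Set H) := by
    intro K hK
    obtain ⟨k, hk⟩ := hswallowS K hK
    refine ⟨k, fun s hs => ?_⟩
    rintro y ⟨x, hx, rfl⟩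
    rw [hΩmem]
    intro t ht
    rw [hππ]
    exact hk (t * s) (by rw [hpadd]; omega) ⟨x, hx, rfl⟩
  exact ⟨p, hpadd, hpcont, hpsurj, hppos, hpuniq, hker,
    Ω, hΩcomp2, hΩopen2, hinv0, hstable0, hfinal⟩



end MainProof
end

section
/- Fix p ∈ [1,∞). Let (X,d,μ) be a metric measure space of bounded geometry and let Y ⊆ X be a discretization of X with covering radius R. For T ≥ R set S_T(x) = Σ_{z ∈ Y} 1_{B(z,T)}(x) (which satisfies 1 ≤ S_T(x) < ∞ for all x) and, for f : Y → ℝ, define φ_T f(x) = Σ_{z ∈ Y} f(z)·1_{B(z,T)}(x)/S_T(x). Then for every s ≥ T there exists a constant C > 0 (depending only on p, s, T and the bounded-geometry data) such that for every f : Y → ℝ one has ∫∫_{{(x,x') ∈ X×X : d(x,x') ≤ s}} |φ_T f(x) − φ_T f(x')|^p dμ(x) dμ(x') ≤ C · Σ_{(z,z') ∈ Y×Y, d(z,z') ≤ 6s} |f(z) − f(z')|^p. -/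
open MeasureTheory
open scoped ENNReal

/-- `S_T(x) = Σ_{z ∈ Y} 1_{B(z,T)}(x)`, the number of points of `Y` at distance `≤ T`
from `x`. -/
noncomputable def STcount {X : Type*} [MetricSpace X] (Y : Set X) (T : ℝ) (x : X) : ℕ :=
  Set.ncard {y ∈ Y | dist x y ≤ T}

/-- `φ_T f (x) = Σ_{z ∈ Y} f(z)·1_{B(z,T)}(x) / S_T(x)`, the extension operator from a
discretization `Y` back to `X`. -/
noncomputable def phiT {X : Type*} [MetricSpace X] (Y : Set X) (T : ℝ) (f : X → ℝ)
    (x : X) : ℝ :=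
  (∑ᶠ y ∈ {y ∈ Y | dist x y ≤ T}, f y) / (STcount Y T x : ℝ)

/-- The difference of two finite averages is bounded by the largest difference of pairs
of values. -/
private lemma avg_sub_avg_le_max {X : Type*} (A B : Finset X) (hA : A.Nonempty)
    (hB : B.Nonempty) (f : X → ℝ) :
    ∃ a ∈ A, ∃ b ∈ B,
      |(∑ a ∈ A, f a) / (A.card : ℝ) - (∑ b ∈ B, f b) / (B.card : ℝ)| ≤ |f a - f b| := by
  obtain ⟨q0, hq0, hmax⟩ := (A ×ˢ B).exists_max_image (fun q => |f q.1 - f q.2|)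
    (hA.product hB)
  obtain ⟨hq1, hq2⟩ := Finset.mem_product.mp hq0
  refine ⟨q0.1, hq1, q0.2, hq2, ?_⟩
  have hn : (0:ℝ) < A.card := by exact_mod_cast hA.card_pos
  have hm : (0:ℝ) < B.card := by exact_mod_cast hB.card_pos
  have hkey : (∑ a ∈ A, f a) / (A.card : ℝ) - (∑ b ∈ B, f b) / (B.card : ℝ)
      = (∑ q ∈ A ×ˢ B, (f q.1 - f q.2)) / ((A.card : ℝ) * B.card) := by
    rw [Finset.sum_product]
    have h1 : ∀ a : X, ∑ b ∈ B, (f a - f b) = (B.card : ℝ) * f a - ∑ b ∈ B, f b := by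
      intro a; rw [Finset.sum_sub_distrib, Finset.sum_const, nsmul_eq_mul]
    rw [Finset.sum_congr rfl fun a _ => h1 a, Finset.sum_sub_distrib, Finset.sum_const,
      ← Finset.mul_sum, nsmul_eq_mul]
    field_simp
  rw [hkey, abs_div, abs_of_pos (mul_pos hn hm)]
  rw [div_le_iff₀ (mul_pos hn hm)]
  calc |∑ q ∈ A ×ˢ B, (f q.1 - f q.2)| ≤ ∑ q ∈ A ×ˢ B, |f q.1 - f q.2| :=
        Finset.abs_sum_le_sum_abs _ _
    _ ≤ (A ×ˢ B).card • |f q0.1 - f q0.2| :=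
        Finset.sum_le_card_nsmul _ _ _ (fun q hq => hmax q hq)
    _ = |f q0.1 - f q0.2| * ((A.card : ℝ) * B.card) := by
        rw [Finset.card_product, nsmul_eq_mul]; push_cast; ring

/-- Continuous energy of the extension is controlled by the discrete energy: for a metric
measure space `(X,d,μ)` of bounded geometry, a discretization `Y ⊆ X` with covering
radius `R`, and `T ≥ R`, for every `s ≥ T` there is `C > 0` such that for every `f`,
`∫∫_{d(x,x') ≤ s} |φ_T f(x) − φ_T f(x')|^p dμ dμ
  ≤ C Σ_{(z,z') ∈ Y², d(z,z') ≤ 6s} |f(z) − f(z')|^p`. -/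
theorem continuous_energy_le_discrete_energy
    {X : Type*} [MetricSpace X] [MeasurableSpace X] [BorelSpace X]
    (μ : Measure X) (v V : ℝ → ℝ)
    (hv : ∀ r > 0, 0 < v r) (hvmono : MonotoneOn v (Set.Ioi 0))
    (hV : ∀ r > 0, 0 < V r) (hVmono : MonotoneOn V (Set.Ioi 0))
    (hgeom : ∀ (x : X) (r : ℝ), 0 < r →
      ENNReal.ofReal (v r) ≤ μ (Metric.closedBall x r) ∧
        μ (Metric.closedBall x r) ≤ ENNReal.ofReal (V r))
    (Y : Set X) (R : ℝ) (hR : 0 < R)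
    (hsep : ∀ y ∈ Y, ∀ y' ∈ Y, y ≠ y' → 1 ≤ dist y y')
    (hcov : ∀ x : X, ∃ y ∈ Y, dist x y ≤ R)
    (p : ℝ) (hp : 1 ≤ p) (T : ℝ) (hT : R ≤ T) (s : ℝ) (hs : T ≤ s) :
    ∃ C : ℝ, 0 < C ∧ ∀ f : X → ℝ,
      (∫⁻ q in {q : X × X | dist q.1 q.2 ≤ s},
          ENNReal.ofReal (|phiT Y T f q.1 - phiT Y T f q.2| ^ p) ∂(μ.prod μ))
        ≤ ENNReal.ofReal C *
          ∑' zz : {q : X × X // q.1 ∈ Y ∧ q.2 ∈ Y ∧ dist q.1 q.2 ≤ 6 * s},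
            ENNReal.ofReal (|f zz.val.1 - f zz.val.2| ^ p) := by
  classical
  have hT0 : 0 < T := lt_of_lt_of_le hR hT
  have hs0 : 0 < s := lt_of_lt_of_le hT0 hs
  have hp0 : 0 ≤ p := le_trans zero_le_one hp
  -- every ε-separated set inside a ball is finite
  have hfinsep : ∀ (A : Set X) (x0 : X) (r ε : ℝ), 0 < ε →
      (A.Pairwise fun a b => ε ≤ dist a b) → A ⊆ Metric.closedBall x0 r → A.Finite := by
    intro A x0 r ε hε hApw hAr
    rcases le_or_gt r 0 with hr | hr
    · refine (Set.finite_singleton x0).subset ?_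
      intro z hz
      have hz' : dist z x0 ≤ r := Metric.mem_closedBall.mp (hAr hz)
      have : dist z x0 ≤ 0 := hz'.trans hr
      exact Set.mem_singleton_iff.mpr (dist_le_zero.mp this)
    · by_contra hinf
      have hε3 : (0:ℝ) < ε / 3 := by linarith
      obtain ⟨n, hn⟩ := exists_nat_gt (V (r + ε/3) / v (ε/3))
      obtain ⟨F, hFsub, hFcard⟩ :=
        (show Set.Infinite A from hinf).exists_subset_card_eq n
      have hdisj : (↑F : Set X).PairwiseDisjoint (fun y => Metric.closedBall y (ε/3)) := by
        intro a ha b hb hab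
        have h1 : ε ≤ dist a b := hApw (hFsub ha) (hFsub hb) hab
        exact Metric.closedBall_disjoint_closedBall (by linarith)
      have hsum : (n : ℝ≥0∞) * ENNReal.ofReal (v (ε/3)) ≤ ENNReal.ofReal (V (r + ε/3)) := by
        calc (n : ℝ≥0∞) * ENNReal.ofReal (v (ε/3))
            = ∑ _y ∈ F, ENNReal.ofReal (v (ε/3)) := by
              rw [Finset.sum_const, hFcard, nsmul_eq_mul]
          _ ≤ ∑ y ∈ F, μ (Metric.closedBall y (ε/3)) :=
              Finset.sum_le_sum fun y _ => (hgeom y (ε/3) hε3).1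
          _ = μ (⋃ y ∈ F, Metric.closedBall y (ε/3)) :=
              (measure_biUnion_finset hdisj fun _ _ => measurableSet_closedBall).symm
          _ ≤ μ (Metric.closedBall x0 (r + ε/3)) := by
              refine measure_mono ?_
              intro z hz
              simp only [Set.mem_iUnion] at hz
              obtain ⟨y, hyF, hz⟩ := hz
              have hyx : dist y x0 ≤ r := Metric.mem_closedBall.mp (hAr (hFsub hyF))
              have hzy : dist z y ≤ ε/3 := Metric.mem_closedBall.mp hz
              have htri : dist z x0 ≤ dist z y + dist y x0 := dist_triangle _ _ _
              exact Metric.mem_closedBall.mpr (by linarith)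
          _ ≤ ENNReal.ofReal (V (r + ε/3)) := (hgeom x0 (r + ε/3) (by linarith)).2
      have hv3 : 0 < v (ε/3) := hv (ε/3) hε3
      have hVr : 0 < V (r + ε/3) := hV (r + ε/3) (by linarith)
      rw [← ENNReal.ofReal_natCast, ← ENNReal.ofReal_mul (by positivity),
        ENNReal.ofReal_le_ofReal_iff hVr.le] at hsum
      have : V (r + ε/3) < (n : ℝ) * v (ε/3) := by
        rw [div_lt_iff₀ hv3] at hn; linarith
      linarith
  -- every bounded piece of Y is finite
  have hfin : ∀ (x : X) (r : ℝ), 0 < r → {y ∈ Y | dist x y ≤ r}.Finite := by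
    intro x r hr
    refine hfinsep _ x r 1 one_pos ?_ ?_
    · intro a ha b hb hab
      exact hsep a ha.1 b hb.1 hab
    · intro y hy
      exact Metric.mem_closedBall.mpr (by rw [dist_comm]; exact hy.2)
  -- closed balls are totally bounded
  have htb : ∀ (x0 : X) (r : ℝ), TotallyBounded (Metric.closedBall x0 r) := by
    intro x0 r
    rw [Metric.totallyBounded_iff]
    intro ε hε
    have hchainub : ∀ c ⊆ {A : Set X | A ⊆ Metric.closedBall x0 r ∧
        A.Pairwise fun a b => ε ≤ dist a b}, IsChain (· ⊆ ·) c →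
        ∃ ub ∈ {A : Set X | A ⊆ Metric.closedBall x0 r ∧
          A.Pairwise fun a b => ε ≤ dist a b}, ∀ s ∈ c, s ⊆ ub := by
      intro c hcS hchain
      refine ⟨⋃₀ c, ⟨?_, ?_⟩, fun t ht => Set.subset_sUnion_of_mem ht⟩
      · exact Set.sUnion_subset fun t ht => (hcS ht).1
      · intro a ha b hb hab
        obtain ⟨ta, hta, haa⟩ := Set.mem_sUnion.mp ha
        obtain ⟨tb, htb', hbb⟩ := Set.mem_sUnion.mp hb
        rcases hchain.total hta htb' with h | h
        · exact (hcS htb').2 (h haa) hbb hab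
        · exact (hcS hta).2 haa (h hbb) hab
    obtain ⟨M, hM⟩ := zorn_subset
      {A : Set X | A ⊆ Metric.closedBall x0 r ∧ A.Pairwise fun a b => ε ≤ dist a b} hchainub
    · obtain ⟨hMsub, hMsep⟩ := hM.prop
      refine ⟨M, hfinsep M x0 r ε hε hMsep hMsub, ?_⟩
      intro z hz
      by_contra hzn
      simp only [Set.mem_iUnion, Metric.mem_ball, not_exists] at hzn
      push_neg at hzn
      have hzM : z ∉ M := by
        intro h
        exact absurd (hzn z h) (by simpa using hε)
      have hins : insert z M ∈
          {A : Set X | A ⊆ Metric.closedBall x0 r ∧ A.Pairwise fun a b => ε ≤ dist a b} := by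
        constructor
        · exact Set.insert_subset hz hMsub
        · refine hMsep.insert ?_
          intro b hb hzb
          refine ⟨hzn b hb, ?_⟩
          rw [dist_comm]
          exact hzn b hb
      have : insert z M ⊆ M := hM.2 hins (Set.subset_insert z M)
      exact hzM (this (Set.mem_insert z M))
  -- second countability
  haveI : SecondCountableTopology X := by
    suffices h : TopologicalSpace.SeparableSpace X from
      UniformSpace.secondCountable_of_separable X
    rw [← TopologicalSpace.isSeparable_univ_iff]
    rcases isEmpty_or_nonempty X with hX | hX
    · haveI := hX
      exact (Set.to_countable _).isSeparable
    · obtain ⟨x0⟩ := hX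
      have hu : (⋃ n : ℕ, Metric.closedBall x0 n) = (Set.univ : Set X) :=
        Set.eq_univ_of_forall fun z => by
          obtain ⟨n, hn⟩ := exists_nat_gt (dist z x0)
          exact Set.mem_iUnion.mpr ⟨n, Metric.mem_closedBall.mpr hn.le⟩
      rw [← hu]
      exact TopologicalSpace.IsSeparable.iUnion fun n => (htb x0 n).isSeparable
  -- nonempty neighborhoods
  have hne : ∀ x : X, ∃ y, y ∈ Y ∧ dist x y ≤ T := by
    intro x
    obtain ⟨y, hy, hd⟩ := hcov x
    exact ⟨y, hy, hd.trans hT⟩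
  -- σ-finiteness
  haveI : SigmaFinite μ := by
    rcases isEmpty_or_nonempty X with hX | hX
    · haveI : IsFiniteMeasure μ :=
        ⟨by rw [Set.univ_eq_empty_iff.mpr hX, measure_empty]; exact ENNReal.zero_lt_top⟩
      infer_instance
    · obtain ⟨x0⟩ := hX
      refine ⟨⟨⟨fun n => Metric.closedBall x0 (n+1), fun _ => trivial, fun n => ?_, ?_⟩⟩⟩
      · exact lt_of_le_of_lt (hgeom x0 (n+1) (by positivity)).2 ENNReal.ofReal_lt_top
      · apply Set.eq_univ_of_forall
        intro z
        obtain ⟨n, hn⟩ := exists_nat_gt (dist z x0)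
        exact Set.mem_iUnion.mpr ⟨n, Metric.mem_closedBall.mpr (by push_cast; linarith)⟩
  -- countability of Y
  have hYc : Y.Countable := by
    rcases isEmpty_or_nonempty X with hX | hX
    · haveI := hX; exact Set.to_countable Y
    · obtain ⟨x0⟩ := hX
      have hsub : Y ⊆ ⋃ n : ℕ, {y ∈ Y | dist x0 y ≤ n + 1} := by
        intro y hy
        obtain ⟨n, hn⟩ := exists_nat_gt (dist x0 y)
        exact Set.mem_iUnion.mpr ⟨n, hy, by linarith⟩
      exact Set.Countable.mono hsub
        (Set.countable_iUnion fun n => (hfin x0 (n+1) (by positivity)).countable)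
  haveI : Countable {q : X × X // q.1 ∈ Y ∧ q.2 ∈ Y ∧ dist q.1 q.2 ≤ 6 * s} := by
    have hsub : {q : X × X | q.1 ∈ Y ∧ q.2 ∈ Y ∧ dist q.1 q.2 ≤ 6 * s} ⊆ Y ×ˢ Y :=
      fun q hq => ⟨hq.1, hq.2.1⟩
    exact (Set.Countable.mono hsub (hYc.prod hYc)).to_subtype
  have hDm : MeasurableSet {q : X × X | dist q.1 q.2 ≤ s} :=
    measurableSet_le (measurable_fst.dist measurable_snd) measurable_const
  refine ⟨V T * V T, mul_pos (hV T hT0) (hV T hT0), fun f => ?_⟩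
  -- pointwise bound
  have hpt : ∀ q ∈ {q : X × X | dist q.1 q.2 ≤ s},
      ENNReal.ofReal (|phiT Y T f q.1 - phiT Y T f q.2| ^ p)
        ≤ ∑' zz : {q : X × X // q.1 ∈ Y ∧ q.2 ∈ Y ∧ dist q.1 q.2 ≤ 6 * s},
            (Metric.closedBall zz.val.1 T ×ˢ Metric.closedBall zz.val.2 T).indicator
              (fun _ => ENNReal.ofReal (|f zz.val.1 - f zz.val.2| ^ p)) q := by
    rintro ⟨x, x'⟩ hq
    have hq' : dist x x' ≤ s := hq
    have hA := hfin x T hT0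
    have hB := hfin x' T hT0
    have hAne : hA.toFinset.Nonempty := by
      obtain ⟨y, hy⟩ := hne x; exact ⟨y, hA.mem_toFinset.mpr hy⟩
    have hBne : hB.toFinset.Nonempty := by
      obtain ⟨y, hy⟩ := hne x'; exact ⟨y, hB.mem_toFinset.mpr hy⟩
    have hphiA : phiT Y T f x = (∑ a ∈ hA.toFinset, f a) / (hA.toFinset.card : ℝ) := by
      rw [phiT, STcount, finsum_mem_eq_finite_toFinset_sum f hA,
        Set.ncard_eq_toFinset_card _ hA]
    have hphiB : phiT Y T f x' = (∑ b ∈ hB.toFinset, f b) / (hB.toFinset.card : ℝ) := by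
      rw [phiT, STcount, finsum_mem_eq_finite_toFinset_sum f hB,
        Set.ncard_eq_toFinset_card _ hB]
    obtain ⟨a0, ha0, b0, hb0, hle⟩ := avg_sub_avg_le_max hA.toFinset hB.toFinset hAne hBne f
    obtain ⟨ha0Y, ha0d⟩ := hA.mem_toFinset.mp ha0
    obtain ⟨hb0Y, hb0d⟩ := hB.mem_toFinset.mp hb0
    have hdist6 : dist a0 b0 ≤ 6 * s := by
      have h1 : dist a0 b0 ≤ dist a0 x + dist x b0 := dist_triangle _ _ _
      have h2 : dist x b0 ≤ dist x x' + dist x' b0 := dist_triangle _ _ _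
      rw [dist_comm a0 x] at h1
      linarith
    set zz0 : {q : X × X // q.1 ∈ Y ∧ q.2 ∈ Y ∧ dist q.1 q.2 ≤ 6 * s} :=
      ⟨(a0, b0), ha0Y, hb0Y, hdist6⟩ with hzz0
    calc ENNReal.ofReal (|phiT Y T f x - phiT Y T f x'| ^ p)
        ≤ ENNReal.ofReal (|f a0 - f b0| ^ p) := by
          apply ENNReal.ofReal_le_ofReal
          apply Real.rpow_le_rpow (abs_nonneg _) _ hp0
          rw [hphiA, hphiB]; exact hle
      _ = (Metric.closedBall zz0.val.1 T ×ˢ Metric.closedBall zz0.val.2 T).indicator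
            (fun _ => ENNReal.ofReal (|f zz0.val.1 - f zz0.val.2| ^ p)) (x, x') := by
          rw [Set.indicator_of_mem]
          exact Set.mem_prod.mpr ⟨Metric.mem_closedBall.mpr ha0d,
            Metric.mem_closedBall.mpr hb0d⟩
      _ ≤ _ := ENNReal.le_tsum zz0
  calc (∫⁻ q in {q : X × X | dist q.1 q.2 ≤ s},
          ENNReal.ofReal (|phiT Y T f q.1 - phiT Y T f q.2| ^ p) ∂(μ.prod μ))
      ≤ ∫⁻ q in {q : X × X | dist q.1 q.2 ≤ s},
          (∑' zz : {q : X × X // q.1 ∈ Y ∧ q.2 ∈ Y ∧ dist q.1 q.2 ≤ 6 * s},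
            (Metric.closedBall zz.val.1 T ×ˢ Metric.closedBall zz.val.2 T).indicator
              (fun _ => ENNReal.ofReal (|f zz.val.1 - f zz.val.2| ^ p)) q) ∂(μ.prod μ) :=
        setLIntegral_mono' hDm hpt
    _ = ∑' zz : {q : X × X // q.1 ∈ Y ∧ q.2 ∈ Y ∧ dist q.1 q.2 ≤ 6 * s},
          ∫⁻ q in {q : X × X | dist q.1 q.2 ≤ s},
            (Metric.closedBall zz.val.1 T ×ˢ Metric.closedBall zz.val.2 T).indicator
              (fun _ => ENNReal.ofReal (|f zz.val.1 - f zz.val.2| ^ p)) q ∂(μ.prod μ) :=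
        lintegral_tsum fun zz =>
          (measurable_const.indicator
            (measurableSet_closedBall.prod measurableSet_closedBall)).aemeasurable
    _ ≤ ∑' zz : {q : X × X // q.1 ∈ Y ∧ q.2 ∈ Y ∧ dist q.1 q.2 ≤ 6 * s},
          ENNReal.ofReal (V T * V T) * ENNReal.ofReal (|f zz.val.1 - f zz.val.2| ^ p) := by
        refine ENNReal.tsum_le_tsum fun zz => ?_
        rw [lintegral_indicator (measurableSet_closedBall.prod measurableSet_closedBall),
          setLIntegral_const]
        calc ENNReal.ofReal (|f zz.val.1 - f zz.val.2| ^ p) *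
              ((μ.prod μ).restrict {q : X × X | dist q.1 q.2 ≤ s}
                (Metric.closedBall zz.val.1 T ×ˢ Metric.closedBall zz.val.2 T))
            ≤ ENNReal.ofReal (|f zz.val.1 - f zz.val.2| ^ p) *
              ((μ.prod μ) (Metric.closedBall zz.val.1 T ×ˢ Metric.closedBall zz.val.2 T)) := by
              gcongr
              exact Measure.restrict_le_self
          _ = ENNReal.ofReal (|f zz.val.1 - f zz.val.2| ^ p) *
              (μ (Metric.closedBall zz.val.1 T) * μ (Metric.closedBall zz.val.2 T)) := by
              rw [Measure.prod_prod]
          _ ≤ ENNReal.ofReal (|f zz.val.1 - f zz.val.2| ^ p) *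
              (ENNReal.ofReal (V T) * ENNReal.ofReal (V T)) := by
              gcongr
              exacts [(hgeom _ T hT0).2, (hgeom _ T hT0).2]
          _ = ENNReal.ofReal (V T * V T) * ENNReal.ofReal (|f zz.val.1 - f zz.val.2| ^ p) := by
              rw [ENNReal.ofReal_mul (hV T hT0).le, mul_comm]
    _ = ENNReal.ofReal (V T * V T) *
          ∑' zz : {q : X × X // q.1 ∈ Y ∧ q.2 ∈ Y ∧ dist q.1 q.2 ≤ 6 * s},
            ENNReal.ofReal (|f zz.val.1 - f zz.val.2| ^ p) := ENNReal.tsum_mul_left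
end
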